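/- arXiv:1012.1289 — 4 statements merged into one kernel-verified Lean document; each statement's English description precedes it below -/
import Mathlib

section
/- For every real number λ ≠ 0, the Schrödinger representation π_λ of the Heisenberg group H_m on L²(ℝ^m) is irreducible: every closed linear subspace V ⊆ L²(ℝ^m) with π_λ(g)V ⊆ V for all g ∈ H_m satisfies V = 0 or V = L²(ℝ^m). -/
set_option maxHeartbeats 1000000

open MeasureTheory
open scoped RealInnerProductSpace

section FourierUniqueness

open FourierTransform
open scoped SchwartzMap ContDiff ComplexConjugate

variable {E : Type*} [NormedAddCommGroup E] [InnerProductSpace ℝ E]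
  [FiniteDimensional ℝ E] [MeasurableSpace E] [BorelSpace E]

/-- A smooth compactly supported real function, as a complex-valued Schwartz map. -/
noncomputable def toCplxSchwartz (g : E → ℝ) (hg : ContDiff ℝ ∞ g)
    (hsupp : HasCompactSupport g) : 𝓢(E, ℂ) where
  toFun := fun x => (g x : ℂ)
  smooth' := Complex.ofRealCLM.contDiff.comp hg
  decay' := by
    intro k n
    have hsupp' : HasCompactSupport (iteratedFDeriv ℝ n (fun x => (g x : ℂ))) :=
      hsupp.comp_left (g := Complex.ofRealCLM) rfl |>.iteratedFDeriv n
    have hcont : Continuous fun x => ‖x‖ ^ k * ‖iteratedFDeriv ℝ n (fun x => (g x : ℂ)) x‖ := by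
      refine Continuous.mul (by fun_prop) ?_
      exact ((Complex.ofRealCLM.contDiff.comp hg).continuous_iteratedFDeriv
        (mod_cast le_top)).norm
    obtain ⟨C, hC⟩ := (hsupp'.norm.mul_left).exists_bound_of_continuous hcont
    exact ⟨C, fun x => by simpa using hC x⟩

/-- Uniqueness: an integrable function with vanishing Fourier transform is a.e. zero. -/
theorem ae_eq_zero_of_fourierIntegral_eq_zero {F : E → ℂ} (hF : Integrable F volume)
    (h : ∀ v, 𝓕 F v = 0) : F =ᵐ[volume] 0 := by
  apply ae_eq_zero_of_integral_contDiff_smul_eq_zero hF.locallyIntegrable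
  intro g hg hgsupp
  set gC := toCplxSchwartz g hg hgsupp with hgC
  set ψ : 𝓢(E, ℂ) := (FourierTransform.fourierCLE ℂ 𝓢(E, ℂ)).symm gC with hψdef
  have hψ : 𝓕 (⇑ψ) = ⇑gC := by
    rw [← SchwartzMap.fourier_coe, ← FourierTransform.fourierCLE_apply (R := ℂ), hψdef,
      (FourierTransform.fourierCLE ℂ 𝓢(E, ℂ)).apply_symm_apply]
  have key := VectorFourier.integral_fourierIntegral_smul_eq_flip (L := innerₗ E)
      (μ := (volume : Measure E)) (ν := (volume : Measure E))
      Real.continuous_fourierChar continuous_inner hF ψ.integrable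
  rw [flip_innerₗ] at key
  have hV : ∀ x, VectorFourier.fourierIntegral Real.fourierChar volume (innerₗ E) F x = 0 := h
  have hV2 : ∀ x, VectorFourier.fourierIntegral Real.fourierChar volume (innerₗ E) (⇑ψ) x
      = gC x := by
    intro x
    rw [show VectorFourier.fourierIntegral Real.fourierChar volume (innerₗ E) (⇑ψ) x
      = 𝓕 (⇑ψ) x from rfl, hψ]
  simp only [hV, hV2, zero_smul, integral_zero] at key
  have hpt : ∀ x : E, g x • F x = F x • gC x := by
    intro x
    show (g x : ℝ) • F x = F x * (g x : ℂ)
    rw [Complex.real_smul, mul_comm]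
  calc ∫ x, g x • F x = ∫ x, F x • gC x := by simp_rw [hpt]
    _ = 0 := key.symm

end FourierUniqueness

/-- `ℝ^m` as a Euclidean space. -/
abbrev Em (m : ℕ) := EuclideanSpace ℝ (Fin m)

/-- The Heisenberg group `H_m` in real coordinates: the element `(it, x+iy)` of
`(Im ℂ) × ℂ^m` is recorded as `(t, x, y) ∈ ℝ × ℝ^m × ℝ^m`. -/
abbrev HeisR (m : ℕ) := ℝ × Em m × Em m

open scoped ComplexConjugate FourierTransform

/-- The Schrödinger representation `π_λ` of the Heisenberg group on `L²(ℝ^m)`,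
i.e. any family of unitary operators satisfying
`(π_λ(it, x+iy)φ)(ξ) = exp(iλ(t + 2⟨x,ξ⟩ + ⟨x,y⟩)) · φ(ξ + y)` a.e., is
irreducible: every closed invariant subspace is `0` or all of `L²(ℝ^m)`. -/
theorem schroedinger_representation_irreducible (m : ℕ) (lam : ℝ) (hlam : lam ≠ 0)
    (π : HeisR m →
      (Lp ℂ 2 (volume : Measure (Em m)) ≃ₗᵢ[ℂ] Lp ℂ 2 (volume : Measure (Em m))))
    (hformula : ∀ (t : ℝ) (x y : Em m) (φ : Lp ℂ 2 (volume : Measure (Em m))),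
      ⇑(π (t, x, y) φ) =ᵐ[volume]
        fun ξ : Em m =>
          Complex.exp (Complex.I * (lam * (t + 2 * ⟪x, ξ⟫ + ⟪x, y⟫) : ℝ)) * φ (ξ + y)) :
    ∀ V : Submodule ℂ (Lp ℂ 2 (volume : Measure (Em m))),
      IsClosed (V : Set (Lp ℂ 2 (volume : Measure (Em m)))) →
      (∀ (g : HeisR m) (φ : Lp ℂ 2 (volume : Measure (Em m))), φ ∈ V → π g φ ∈ V) →
      V = ⊥ ∨ V = ⊤ := by
  intro V hVclosed hVinv
  by_cases hVbot : V = ⊥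
  · exact Or.inl hVbot
  right
  obtain ⟨f, hfV, hf0⟩ := V.ne_bot_iff.mp hVbot
  have hkey : ∀ g : Lp ℂ 2 (volume : Measure (Em m)), g ∈ Vᗮ → g = 0 := by
    intro g hg
    -- the matrix coefficients vanish
    have hcoef : ∀ x y : Em m, (inner ℂ ((π (0, x, y)) f) g : ℂ) = 0 := fun x y =>
      (Submodule.mem_orthogonal V g).mp hg _ (hVinv _ f hfV)
    -- for each `y`, the function `ξ ↦ conj (f (ξ+y)) * g ξ` vanishes a.e.
    have hFzero : ∀ y : Em m,
        (fun ξ : Em m => conj (f (ξ + y)) * g ξ) =ᵐ[volume] 0 := by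
      intro y
      set fy : Lp ℂ 2 (volume : Measure (Em m)) := (π (0, 0, y)) f with hfydef
      have hfy : ⇑fy =ᵐ[volume] fun ξ => f (ξ + y) := by
        refine (hformula 0 0 y f).trans (Filter.Eventually.of_forall fun ξ => ?_)
        norm_num [inner_zero_left]
      set F : Em m → ℂ := fun ξ => conj (f (ξ + y)) * g ξ with hFdef
      have hFint : Integrable F volume := by
        refine (L2.integrable_inner (𝕜 := ℂ) fy g).congr ?_
        filter_upwards [hfy] with ξ hξ
        rw [hFdef]; simp [← hξ, RCLike.inner_apply, mul_comm]
      -- vanishing of twisted integrals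
      have hvan : ∀ x : Em m,
          ∫ ξ : Em m, Complex.exp (-(Complex.I * ((2 * lam * ⟪x, ξ⟫ : ℝ) : ℂ))) * F ξ = 0 := by
        intro x
        have h0 := hcoef x y
        rw [L2.inner_def] at h0
        have hint : (fun ξ => (inner ℂ (((π (0, x, y)) f) ξ) (g ξ) : ℂ)) =ᵐ[volume]
            fun ξ => Complex.exp (-(Complex.I * ((lam * ⟪x, y⟫ : ℝ) : ℂ))) *
              (Complex.exp (-(Complex.I * ((2 * lam * ⟪x, ξ⟫ : ℝ) : ℂ))) * F ξ) := by
          filter_upwards [hformula 0 x y f] with ξ hξ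
          have hc : (starRingEnd ℂ)
              (Complex.exp (Complex.I * ((lam * (0 + 2 * ⟪x, ξ⟫ + ⟪x, y⟫) : ℝ) : ℂ)))
              = Complex.exp (-(Complex.I * ((lam * ⟪x, y⟫ : ℝ) : ℂ)))
                * Complex.exp (-(Complex.I * ((2 * lam * ⟪x, ξ⟫ : ℝ) : ℂ))) := by
            rw [← Complex.exp_conj, ← Complex.exp_add]
            congr 1
            rw [map_mul, Complex.conj_I, Complex.conj_ofReal]
            push_cast
            ring
          simp only [hFdef]
          rw [RCLike.inner_apply, hξ, map_mul, hc]
          ring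
        rw [integral_congr_ae hint, integral_const_mul] at h0
        rcases mul_eq_zero.mp h0 with h | h
        · exact absurd h (Complex.exp_ne_zero _)
        · exact h
      -- hence the Fourier transform of `F` vanishes
      have hfou : ∀ v : Em m, 𝓕 F v = 0 := by
        intro v
        have hx := hvan ((Real.pi / lam) • v)
        rw [Real.fourier_eq, ← hx]
        congr 1
        ext ξ
        rw [Circle.smul_def, Real.fourierChar_apply]
        congr 2
        have h1 : ⟪(Real.pi / lam) • v, ξ⟫ = (Real.pi / lam) * ⟪v, ξ⟫ :=
          real_inner_smul_left _ _ _
        have h2 : 2 * lam * (Real.pi / lam * ⟪v, ξ⟫) = 2 * Real.pi * ⟪v, ξ⟫ := by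
          field_simp
        rw [h1, h2, real_inner_comm ξ v]
        push_cast
        ring
      exact ae_eq_zero_of_fourierIntegral_eq_zero hFint hfou
    -- conclude `f = 0` or `g = 0` by a Fubini argument
    have hfm := Lp.aestronglyMeasurable f
    have hgm := Lp.aestronglyMeasurable g
    set f' := hfm.mk f with hf'def
    set g' := hgm.mk g with hg'def
    have hf'meas : Measurable f' := hfm.stronglyMeasurable_mk.measurable
    have hg'meas : Measurable g' := hgm.stronglyMeasurable_mk.measurable
    have hf'ae : ⇑f =ᵐ[volume] f' := hfm.ae_eq_mk
    have hg'ae : ⇑g =ᵐ[volume] g' := hgm.ae_eq_mk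
    set Φ : Em m × Em m → ENNReal :=
      fun p => (‖g' p.2‖₊ : ENNReal) * (‖f' (p.2 + p.1)‖₊ : ENNReal) with hΦdef
    have hΦmeas : Measurable Φ := by
      apply Measurable.fun_mul
      · exact (hg'meas.comp measurable_snd).nnnorm.coe_nnreal_ennreal
      · exact (hf'meas.comp (measurable_snd.add measurable_fst)).nnnorm.coe_nnreal_ennreal
    have hinner : ∀ y : Em m, (∫⁻ ξ, Φ (y, ξ)) = 0 := by
      intro y
      have h1 : (fun ξ => f' (ξ + y)) =ᵐ[volume] fun ξ => f (ξ + y) :=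
        (measurePreserving_add_right volume y).quasiMeasurePreserving.ae_eq hf'ae.symm
      have h2 : (fun ξ : Em m => Φ (y, ξ)) =ᵐ[volume] 0 := by
        filter_upwards [h1, hg'ae.symm, hFzero y] with ξ h1ξ h2ξ h3ξ
        simp only [hΦdef]
        rw [h1ξ, h2ξ]
        rcases mul_eq_zero.mp h3ξ with h | h
        · have : f (ξ + y) = 0 := by simpa using h
          simp [this]
        · simp [h]
      rw [lintegral_congr_ae h2]; simp
    set C := ∫⁻ z, (‖f' z‖₊ : ENNReal) with hCdef
    have hCg : C * ∫⁻ ξ, (‖g' ξ‖₊ : ENNReal) = 0 := by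
      have hswap : (∫⁻ ξ, C * (‖g' ξ‖₊ : ENNReal)) = 0 := by
        calc (∫⁻ ξ, C * (‖g' ξ‖₊ : ENNReal))
            = ∫⁻ ξ, ∫⁻ y, Φ (y, ξ) := by
              refine lintegral_congr fun ξ => ?_
              have hm : Measurable fun y : Em m => (‖f' (ξ + y)‖₊ : ENNReal) :=
                (hf'meas.comp (measurable_const_add ξ)).nnnorm.coe_nnreal_ennreal
              rw [show (fun y : Em m => Φ (y, ξ))
                  = fun y => (‖g' ξ‖₊ : ENNReal) * (‖f' (ξ + y)‖₊ : ENNReal) from rfl]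
              rw [lintegral_const_mul _ hm,
                lintegral_add_left_eq_self (fun z => (‖f' z‖₊ : ENNReal)) ξ]
              rw [mul_comm]
          _ = ∫⁻ y, ∫⁻ ξ, Φ (y, ξ) := (lintegral_lintegral_swap hΦmeas.aemeasurable).symm
          _ = 0 := by simp [hinner]
      rw [← hswap, lintegral_const_mul C hg'meas.nnnorm.coe_nnreal_ennreal]
    rcases mul_eq_zero.mp hCg with hC | hG
    · exfalso
      apply hf0
      have hf'0 : f' =ᵐ[volume] 0 := by
        have := (lintegral_eq_zero_iff hf'meas.nnnorm.coe_nnreal_ennreal).mp hC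
        filter_upwards [this] with z hz
        simpa using hz
      exact Lp.eq_zero_iff_ae_eq_zero.mpr (hf'ae.trans hf'0)
    · have hg'0 : g' =ᵐ[volume] 0 := by
        have := (lintegral_eq_zero_iff hg'meas.nnnorm.coe_nnreal_ennreal).mp hG
        filter_upwards [this] with z hz
        simpa using hz
      exact Lp.eq_zero_iff_ae_eq_zero.mpr (hg'ae.trans hg'0)
  have hbot : Vᗮ = ⊥ := (Submodule.eq_bot_iff _).mpr hkey
  haveI : CompleteSpace V := hVclosed.completeSpace_coe
  exact Submodule.orthogonal_eq_bot_iff.mp hbot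
end

section
/- Let G be a second countable, locally compact, unimodular topological group, Z a closed subgroup of the center of G, μ a Haar measure on G/Z, and π an irreducible unitary representation of G on H with central character ζ that is square integrable modulo Z. Fix a nonzero vector v ∈ H. Then the map T : u ↦ f_{u,v} is an injective bounded linear map from H into the Hilbert space L²(G/Z : ζ) = {measurable F : G → ℂ with F(gz) = ζ(z)F(g) for all z ∈ Z and ∫_{G/Z} |F|² dμ < ∞}, and T intertwines π with the left regular action (ℓ(x)F)(g) = F(x⁻¹g); hence π is unitarily equivalent to a subrepresentation of the left regular representation ℓ_ζ of G on L²(G/Z : ζ). -/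
open MeasureTheory
open scoped ComplexInnerProductSpace


lemma aux_conj_cfc {H : Type*} [NormedAddCommGroup H] [InnerProductSpace ℂ H] [CompleteSpace H]
    (e : H ≃ₗᵢ[ℂ] H) (A : H →L[ℂ] H) (hA : IsSelfAdjoint A)
    (hcomm : ∀ w, A (e w) = e (A w)) (f : ℝ → ℝ) (hf : Continuous f) :
    ∀ w, cfc f A (e w) = e (cfc f A w) := by
  let U : H →L[ℂ] H := e.toLinearIsometry.toContinuousLinearMap
  let U' : H →L[ℂ] H := e.symm.toLinearIsometry.toContinuousLinearMap
  have hUap : ∀ w, U w = e w := fun _ => rfl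
  have hU'ap : ∀ w, U' w = e.symm w := fun _ => rfl
  have hstarU : star U = U' := by
    rw [ContinuousLinearMap.star_eq_adjoint]
    symm
    rw [ContinuousLinearMap.eq_adjoint_iff]
    intro x y
    rw [hU'ap, hUap, ← LinearIsometryEquiv.inner_map_map e (e.symm x) y,
      LinearIsometryEquiv.apply_symm_apply]
  have hstarU' : star U' = U := by
    rw [ContinuousLinearMap.star_eq_adjoint]
    symm
    rw [ContinuousLinearMap.eq_adjoint_iff]
    intro x y
    rw [hU'ap, hUap, ← LinearIsometryEquiv.inner_map_map e.symm (e x) y,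
      LinearIsometryEquiv.symm_apply_apply]
  let φ : (H →L[ℂ] H) →⋆ₐ[ℂ] (H →L[ℂ] H) :=
  { toFun := fun B => U ∘L B ∘L U'
    map_one' := by ext w; simp [U, U']
    map_mul' := fun B C => by ext w; simp [U, U']
    map_zero' := by ext w; simp
    map_add' := fun B C => by ext w; simp
    commutes' := fun c => by ext w; simp [U, U', Algebra.algebraMap_eq_smul_one]
    map_star' := fun B => by
      simp only [ContinuousLinearMap.star_eq_adjoint, ← ContinuousLinearMap.comp_assoc]
      rw [ContinuousLinearMap.adjoint_comp, ContinuousLinearMap.adjoint_comp,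
        ← ContinuousLinearMap.star_eq_adjoint, ← ContinuousLinearMap.star_eq_adjoint,
        ← ContinuousLinearMap.star_eq_adjoint, hstarU, hstarU']
      rw [ContinuousLinearMap.comp_assoc] }
  have hφap : ∀ B, φ B = U ∘L B ∘L U' := fun _ => rfl
  have hφcont : Continuous φ := by
    show Continuous fun B => U ∘L B ∘L U'
    exact continuous_const.clm_comp (continuous_id.clm_comp continuous_const)
  have hφA : φ A = A := by
    ext w
    rw [hφap]
    show U (A (U' w)) = A w
    rw [hUap, hU'ap, ← hcomm, LinearIsometryEquiv.apply_symm_apply]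
  have hφA' : IsSelfAdjoint (φ A) := hφA.symm ▸ hA
  have key : φ (cfc f A) = cfc f A := by
    rw [StarAlgHomClass.map_cfc φ f A (hf.continuousOn) hφcont hA hφA', hφA]
  intro w
  have h1 : cfc f A (e w) = U ((cfc f A) (U' (e w))) := by
    conv_lhs => rw [← key, hφap]
    rfl
  rw [h1, hUap, hU'ap, LinearIsometryEquiv.symm_apply_apply]

lemma aux_schur {H : Type*} [NormedAddCommGroup H] [InnerProductSpace ℂ H] [CompleteSpace H]
    [Nontrivial H] {ι : Type*} (e : ι → (H ≃ₗᵢ[ℂ] H))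
    (hirr : ∀ V : Submodule ℂ H, IsClosed (V : Set H) →
      (∀ i : ι, ∀ w ∈ V, e i w ∈ V) → V = ⊥ ∨ V = ⊤)
    (A : H →L[ℂ] H) (hA : IsSelfAdjoint A) (hcomm : ∀ i w, A (e i w) = e i (A w)) :
    ∃ r : ℝ, A = (r : ℝ) • (1 : H →L[ℂ] H) := by
  have hne : (spectrum ℝ A).Nonempty := hA.spectrum_nonempty
  obtain ⟨r, hr⟩ := hne
  suffices hsub : spectrum ℝ A ⊆ {r} by
    refine ⟨r, ?_⟩
    have : A = cfc (id : ℝ → ℝ) A := (cfc_id ℝ A hA).symm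
    have h2 : cfc (id : ℝ → ℝ) A = cfc (fun _ : ℝ => r) A := cfc_congr (fun x hx => hsub hx)
    rw [this, h2, cfc_const r A hA, Algebra.algebraMap_eq_smul_one]
  intro b hb
  simp only [Set.mem_singleton_iff]
  by_contra hne'
  -- two distinct spectrum points r and b
  set δ : ℝ := |b - r| / 2 with hδ
  have hδpos : 0 < δ := by
    have : b - r ≠ 0 := sub_ne_zero.mpr hne'
    positivity
  let f : ℝ → ℝ := fun t => max 0 (1 - |t - r| / δ)
  let h : ℝ → ℝ := fun t => max 0 (1 - |t - b| / δ)
  have hfc : Continuous f := by fun_prop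
  have hhc : Continuous h := by fun_prop
  have hfr : f r = 1 := by simp [f, hδpos.le]
  have hhb : h b = 1 := by simp [h, hδpos.le]
  have hmul : ∀ t, f t * h t = 0 := by
    intro t
    rcases le_or_gt (1 - |t - r| / δ) 0 with h1 | h1
    · simp [f, max_eq_left h1]
    rcases le_or_gt (1 - |t - b| / δ) 0 with h2 | h2
    · simp [h, max_eq_left h2]
    exfalso
    have e1 : |t - r| < δ := by
      have h1' : |t - r| / δ < 1 := by linarith
      exact (div_lt_one hδpos).mp h1'
    have e2 : |t - b| < δ := by
      have h2' : |t - b| / δ < 1 := by linarith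
      exact (div_lt_one hδpos).mp h2'
    have : |b - r| ≤ |t - r| + |t - b| := by
      calc |b - r| = |(t - r) - (t - b)| := by ring_nf
        _ ≤ |t - r| + |t - b| := abs_sub _ _
    have : |b - r| < 2 * δ := by linarith
    rw [hδ] at this; linarith
  set C1 := cfc f A with hC1
  set C2 := cfc h A with hC2
  have hC1ne : C1 ≠ 0 := by
    intro h0
    have : (1 : ℝ) ∈ spectrum ℝ C1 := by
      rw [hC1, cfc_map_spectrum f A hA hfc.continuousOn]
      exact ⟨r, hr, hfr⟩
    rw [h0] at this
    rw [spectrum.zero_eq] at this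
    norm_num at this
  have hC2ne : C2 ≠ 0 := by
    intro h0
    have : (1 : ℝ) ∈ spectrum ℝ C2 := by
      rw [hC2, cfc_map_spectrum h A hA hhc.continuousOn]
      exact ⟨b, hb, hhb⟩
    rw [h0] at this
    rw [spectrum.zero_eq] at this
    norm_num at this
  have hprod : C2 * C1 = 0 := by
    rw [hC1, hC2, ← cfc_mul h f A hhc.continuousOn hfc.continuousOn]
    have : (fun t => h t * f t) = fun _ : ℝ => (0:ℝ) := by
      funext t; rw [mul_comm]; exact hmul t
    rw [this]
    exact cfc_const_zero ℝ A
  -- the kernel of C2 is a closed invariant subspace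
  let V : Submodule ℂ H := LinearMap.ker (C2 : H →ₗ[ℂ] H)
  have hVclosed : IsClosed (V : Set H) := ContinuousLinearMap.isClosed_ker C2
  have hVinv : ∀ i : ι, ∀ w ∈ V, e i w ∈ V := by
    intro i w hw
    have hw' : C2 w = 0 := hw
    have h2 : C2 (e i w) = e i (C2 w) := aux_conj_cfc (e i) A hA (hcomm i) h hhc w
    show C2 (e i w) = 0
    rw [h2, hw', map_zero]
  rcases hirr V hVclosed hVinv with hbot | htop
  · -- V = ⊥ but C1's range is in V and C1 ≠ 0
    obtain ⟨w, hw⟩ : ∃ w, C1 w ≠ 0 := by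
      by_contra hc
      push_neg at hc
      exact hC1ne (ContinuousLinearMap.ext fun w => by simp [hc w])
    have hmem : C1 w ∈ V := by
      show C2 (C1 w) = 0
      have := congrArg (fun B : H →L[ℂ] H => B w) hprod
      simpa using this
    rw [hbot] at hmem
    exact hw (by simpa using hmem)
  · -- V = ⊤ means C2 = 0
    apply hC2ne
    ext w
    have hw : w ∈ V := htop.symm ▸ Submodule.mem_top
    have : C2 w = 0 := hw
    simpa using this

set_option maxHeartbeats 2000000 in
/-- Let `π` be an irreducible unitary representation, square integrable modulo a
closed central subgroup `Z` with unitary central character `ζ`, of a second countable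
locally compact unimodular group `G`. Fix `0 ≠ v ∈ H`.  Then the coefficient map
`T : u ↦ f_{u,v} = (g ↦ ⟨u, π(g)v⟩)` is an injective bounded (conjugate-)linear map
of `H` into the space `L²(G/Z : ζ)` of measurable functions `F` with
`F(gz) = ζ(z)F(g)` and `∫_{G/Z} |F|² dμ < ∞`; it intertwines `π` with the left
regular action `(ℓ(x)F)(g) = F(x⁻¹g)`, and (being a positive multiple of an
isometry) exhibits `π` as unitarily equivalent to a subrepresentation of the left
regular representation `ℓ_ζ` of `G` on `L²(G/Z : ζ)`. -/
theorem coefficient_map_embeds_into_regular_representation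
    {G : Type*} [Group G] [TopologicalSpace G] [IsTopologicalGroup G]
    [LocallyCompactSpace G] [SecondCountableTopology G]
    [MeasurableSpace G] [BorelSpace G]
    (ν : Measure G) [ν.IsHaarMeasure] [ν.IsMulRightInvariant]
    (Z : Subgroup G) [Z.Normal] (hZcentral : Z ≤ Subgroup.center G)
    (hZclosed : IsClosed (Z : Set G))
    [MeasurableSpace (G ⧸ Z)] [BorelSpace (G ⧸ Z)]
    (μ : Measure (G ⧸ Z)) [μ.IsHaarMeasure]
    {H : Type*} [NormedAddCommGroup H] [InnerProductSpace ℂ H] [CompleteSpace H]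
    (π : G → (H ≃ₗᵢ[ℂ] H))
    (hhom : ∀ (g g' : G) (v : H), π (g * g') v = π g (π g' v))
    (hcont : Continuous fun p : G × H => π p.1 p.2)
    (hirr : ∀ V : Submodule ℂ H, IsClosed (V : Set H) →
      (∀ g : G, ∀ v ∈ V, π g v ∈ V) → V = ⊥ ∨ V = ⊤)
    (ζ : Z → ℂ)
    (hζhom : ∀ z z' : Z, ζ (z * z') = ζ z * ζ z')
    (hζunit : ∀ z : Z, ‖ζ z‖ = 1)
    (hζcont : Continuous ζ)
    (hcentral : ∀ (z : Z) (v : H), π (z : G) v = ζ z • v)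
    -- `π` is square integrable modulo `Z`
    (hL2 : ∀ u v : H, Integrable (fun x : G ⧸ Z => ‖⟪u, π (Quotient.out x) v⟫‖ ^ 2) μ)
    -- the fixed nonzero vector `v` and the coefficient map `T`
    (v : H) (hv : v ≠ 0)
    (T : H → G → ℂ) (hT : ∀ (u : H) (g : G), T u g = ⟪u, π g v⟫) :
    -- `T` is additive and conjugate-linear
    (∀ u u' : H, T (u + u') = T u + T u') ∧
    (∀ (c : ℂ) (u : H), T (c • u) = (starRingEnd ℂ) c • T u) ∧
    -- `T` is injective
    Function.Injective T ∧
    -- `T` takes values in `L²(G/Z : ζ)`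
    (∀ (u : H) (g : G) (z : Z), T u (g * (z : G)) = ζ z * T u g) ∧
    (∀ u : H, Integrable (fun x : G ⧸ Z => ‖T u (Quotient.out x)‖ ^ 2) μ) ∧
    -- `T` is bounded, indeed a positive multiple of an isometry
    (∃ c : ℝ, 0 < c ∧
      ∀ u : H, ∫ x : G ⧸ Z, ‖T u (Quotient.out x)‖ ^ 2 ∂μ = c * ‖u‖ ^ 2) ∧
    -- `T` intertwines `π` with the left regular action `(ℓ(x)F)(g) = F(x⁻¹g)`
    (∀ (x g : G) (u : H), T (π x u) g = T u (x⁻¹ * g)) := by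
  classical
  -- basic facts about the representation
  have hπ1 : ∀ w : H, π 1 w = w := by
    intro w
    have h := hhom 1 1 w
    rw [one_mul] at h
    exact ((π 1).injective h).symm
  have hπinv : ∀ (g : G) (w : H), π g (π g⁻¹ w) = w := by
    intro g w
    rw [← hhom, mul_inv_cancel]
    exact hπ1 w
  have hπinv' : ∀ (g : G) (w : H), π g⁻¹ (π g w) = w := by
    intro g w
    rw [← hhom, inv_mul_cancel]
    exact hπ1 w
  have hadj : ∀ (g : G) (a b : H), (⟪π g a, b⟫ : ℂ) = ⟪a, π g⁻¹ b⟫ := by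
    intro g a b
    calc (⟪π g a, b⟫ : ℂ) = ⟪π g a, π g (π g⁻¹ b)⟫ := by rw [hπinv]
      _ = ⟪a, π g⁻¹ b⟫ := LinearIsometryEquiv.inner_map_map (π g) a _
  -- the seven conjuncts, the easy ones first
  have c1 : ∀ u u' : H, T (u + u') = T u + T u' := by
    intro u u'
    funext g
    simp [hT, inner_add_left]
  have c2 : ∀ (c : ℂ) (u : H), T (c • u) = (starRingEnd ℂ) c • T u := by
    intro c u
    funext g
    simp [hT, inner_smul_left, mul_comm]
  have c4 : ∀ (u : H) (g : G) (z : Z), T u (g * (z : G)) = ζ z * T u g := by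
    intro u g z
    rw [hT, hT, hhom, hcentral, _root_.map_smul, inner_smul_right]
  have c7 : ∀ (x g : G) (u : H), T (π x u) g = T u (x⁻¹ * g) := by
    intro x g u
    rw [hT, hT, hadj]
    congr 1
    exact (hhom x⁻¹ g v).symm
  have c3 : Function.Injective T := by
    intro a b hab
    have hdiff : ∀ g : G, (⟪a - b, π g v⟫ : ℂ) = 0 := by
      intro g
      have h := congrFun hab g
      rw [hT, hT] at h
      rw [inner_sub_left, h, sub_self]
    set S : Set H := Set.range fun g : G => π g v with hS
    set V : Submodule ℂ H := (Submodule.span ℂ S).topologicalClosure with hV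
    have hVclosed : IsClosed (V : Set H) := Submodule.isClosed_topologicalClosure _
    have hVinv : ∀ g : G, ∀ w ∈ V, π g w ∈ V := by
      intro g w hw
      have hg : Continuous fun w : H => π g w :=
        hcont.comp (continuous_const.prodMk continuous_id)
      have hmapsto : Set.MapsTo (fun w : H => π g w)
          ((Submodule.span ℂ S : Submodule ℂ H) : Set H)
          ((Submodule.span ℂ S : Submodule ℂ H) : Set H) := by
        intro y hy
        simp only [SetLike.mem_coe] at hy ⊢
        induction hy using Submodule.span_induction with
        | mem s hs =>
          obtain ⟨g', rfl⟩ := hs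
          apply Submodule.subset_span
          exact ⟨g * g', by simpa using hhom g g' v⟩
        | zero => rw [(π g).map_zero]; exact Submodule.zero_mem _
        | add x y _ _ hx hy => rw [(π g).map_add]; exact Submodule.add_mem _ hx hy
        | smul c x _ hx => rw [(π g).map_smul]; exact Submodule.smul_mem _ c hx
      have hw' : w ∈ closure ((Submodule.span ℂ S : Submodule ℂ H) : Set H) := hw
      have := hmapsto.closure hg hw'
      exact this
    have hVne : V ≠ ⊥ := by
      intro hbot
      apply hv
      have hvV : v ∈ V := by
        apply Submodule.le_topologicalClosure
        apply Submodule.subset_span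
        exact ⟨1, hπ1 v⟩
      rw [hbot] at hvV
      simpa using hvV
    have hVtop : V = ⊤ := (hirr V hVclosed hVinv).resolve_left hVne
    have hsub : a - b = 0 := by
      set f : H →L[ℂ] ℂ := innerSL ℂ (a - b) with hf
      have hker : V ≤ LinearMap.ker (f : H →ₗ[ℂ] ℂ) := by
        apply Submodule.topologicalClosure_minimal
        · rw [Submodule.span_le]
          rintro y ⟨g, rfl⟩
          simp only [SetLike.mem_coe, LinearMap.mem_ker]
          exact hdiff g
        · exact ContinuousLinearMap.isClosed_ker f
      have hmem : a - b ∈ V := hVtop.symm ▸ Submodule.mem_top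
      have h0 : f (a - b) = 0 := hker hmem
      rw [hf] at h0
      simp only [innerSL_apply_apply] at h0
      exact inner_self_eq_zero.mp h0
    exact sub_eq_zero.mp hsub
  have hQint : ∀ a : H, Integrable (fun x : G ⧸ Z => ‖T a (Quotient.out x)‖ ^ 2) μ := by
    intro a
    have h : (fun x : G ⧸ Z => ‖T a (Quotient.out x)‖ ^ 2)
        = fun x => ‖(⟪a, π (Quotient.out x) v⟫ : ℂ)‖ ^ 2 := by
      funext x; rw [hT]
    rw [h]
    exact hL2 a v
  refine ⟨c1, c2, c3, c4, hQint, ?_, c7⟩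
  -- the heart of the matter: square-integrability gives a multiple of an isometry
  -- the coefficient pairing descends to the quotient
  have hout : ∀ g : G, ∃ z : Z, (Quotient.out (QuotientGroup.mk g : G ⧸ Z)) = g * (z : G) := by
    intro g
    have hz : g⁻¹ * (Quotient.out (QuotientGroup.mk g : G ⧸ Z)) ∈ Z := by
      rw [← QuotientGroup.eq]
      exact (Quotient.out_eq _).symm
    exact ⟨⟨_, hz⟩, (mul_inv_cancel_left g _).symm⟩
  set Φ : H → H → (G ⧸ Z) → ℂ :=
    fun a b x => (starRingEnd ℂ) (T a (Quotient.out x)) * T b (Quotient.out x) with hΦ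
  have hζ1 : ∀ z : Z, (starRingEnd ℂ) (ζ z) * ζ z = 1 := by
    intro z
    rw [mul_comm, Complex.mul_conj', hζunit]
    norm_num
  have hΦmk : ∀ (a b : H) (g : G),
      Φ a b (QuotientGroup.mk g) = (starRingEnd ℂ) (T a g) * T b g := by
    intro a b g
    obtain ⟨z, hz⟩ := hout g
    show (starRingEnd ℂ) (T a (Quotient.out (QuotientGroup.mk g : G ⧸ Z)))
        * T b (Quotient.out (QuotientGroup.mk g : G ⧸ Z)) = _
    rw [hz, c4, c4, map_mul]
    calc ((starRingEnd ℂ) (ζ z) * (starRingEnd ℂ) (T a g)) * (ζ z * T b g)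
        = ((starRingEnd ℂ) (ζ z) * ζ z) * ((starRingEnd ℂ) (T a g) * T b g) := by ring
      _ = (starRingEnd ℂ) (T a g) * T b g := by rw [hζ1 z, one_mul]
  have hTcontg : ∀ a : H, Continuous fun g : G => T a g := by
    intro a
    have h1 : Continuous fun g : G => π g v :=
      hcont.comp (continuous_id.prodMk continuous_const)
    have h2 : (fun g : G => T a g) = fun g => (⟪a, π g v⟫ : ℂ) := funext (hT a)
    rw [h2]
    exact Continuous.inner continuous_const h1
  have hΦcont : ∀ a b : H, Continuous (Φ a b) := by
    intro a b
    apply isQuotientMap_quotient_mk'.continuous_iff.mpr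
    have h2 : (Φ a b) ∘ (QuotientGroup.mk : G → G ⧸ Z)
        = fun g => (starRingEnd ℂ) (T a g) * T b g := funext (hΦmk a b)
    show Continuous ((Φ a b) ∘ (QuotientGroup.mk : G → G ⧸ Z))
    rw [h2]
    exact ((hTcontg a).star).mul (hTcontg b)
  have hΦre : ∀ (a : H) (x : G ⧸ Z), Φ a a x = ((‖T a (Quotient.out x)‖ ^ 2 : ℝ) : ℂ) := by
    intro a x
    show (starRingEnd ℂ) (T a (Quotient.out x)) * T a (Quotient.out x) = _
    rw [mul_comm, Complex.mul_conj']
    norm_cast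
  have hΦint : ∀ a b : H, Integrable (Φ a b) μ := by
    intro a b
    apply Integrable.mono' (((hQint a).add (hQint b)).div_const 2)
      ((hΦcont a b).aestronglyMeasurable)
    filter_upwards with x
    show ‖(starRingEnd ℂ) (T a (Quotient.out x)) * T b (Quotient.out x)‖ ≤ _
    rw [norm_mul, RCLike.norm_conj]
    have h1 := norm_nonneg (T a (Quotient.out x))
    have h2 := norm_nonneg (T b (Quotient.out x))
    simp only [Pi.add_apply]
    nlinarith [sq_nonneg (‖T a (Quotient.out x)‖ - ‖T b (Quotient.out x)‖)]
  set Qr : H → ℝ := fun a => ∫ x : G ⧸ Z, ‖T a (Quotient.out x)‖ ^ 2 ∂μ with hQr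
  have hQnonneg : ∀ a, 0 ≤ Qr a := fun a => integral_nonneg fun x => sq_nonneg _
  set I : H → H → ℂ := fun a b => ∫ x : G ⧸ Z, Φ a b x ∂μ with hI
  have hIdiag : ∀ a, I a a = ((Qr a : ℝ) : ℂ) := by
    intro a
    show ∫ x : G ⧸ Z, Φ a a x ∂μ = _
    simp_rw [hΦre a]
    exact integral_ofReal
  have hIadd1 : ∀ a a' b : H, I (a + a') b = I a b + I a' b := by
    intro a a' b
    show ∫ x : G ⧸ Z, Φ (a + a') b x ∂μ = (∫ x : G ⧸ Z, Φ a b x ∂μ) + ∫ x : G ⧸ Z, Φ a' b x ∂μ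
    rw [← integral_add (hΦint a b) (hΦint a' b)]
    apply integral_congr_ae
    filter_upwards with x
    show (starRingEnd ℂ) (T (a + a') (Quotient.out x)) * T b (Quotient.out x) = _
    rw [c1]
    simp only [Pi.add_apply, map_add]
    ring
  have hIadd2 : ∀ a b b' : H, I a (b + b') = I a b + I a b' := by
    intro a b b'
    show ∫ x : G ⧸ Z, Φ a (b + b') x ∂μ = (∫ x : G ⧸ Z, Φ a b x ∂μ) + ∫ x : G ⧸ Z, Φ a b' x ∂μ
    rw [← integral_add (hΦint a b) (hΦint a b')]
    apply integral_congr_ae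
    filter_upwards with x
    show (starRingEnd ℂ) (T a (Quotient.out x)) * T (b + b') (Quotient.out x) = _
    rw [c1]
    simp only [Pi.add_apply]
    ring
  have hIsmul1 : ∀ (c : ℂ) (a b : H), I (c • a) b = c * I a b := by
    intro c a b
    show ∫ x : G ⧸ Z, Φ (c • a) b x ∂μ = c * ∫ x : G ⧸ Z, Φ a b x ∂μ
    rw [← smul_eq_mul, ← integral_smul]
    apply integral_congr_ae
    filter_upwards with x
    show (starRingEnd ℂ) (T (c • a) (Quotient.out x)) * T b (Quotient.out x) = _
    rw [c2]
    simp only [Pi.smul_apply, smul_eq_mul, map_mul, Complex.conj_conj]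
    ring
  have hIsmul2 : ∀ (c : ℂ) (a b : H), I a (c • b) = (starRingEnd ℂ) c * I a b := by
    intro c a b
    show ∫ x : G ⧸ Z, Φ a (c • b) x ∂μ = (starRingEnd ℂ) c * ∫ x : G ⧸ Z, Φ a b x ∂μ
    rw [← smul_eq_mul, ← integral_smul]
    apply integral_congr_ae
    filter_upwards with x
    show (starRingEnd ℂ) (T a (Quotient.out x)) * T (c • b) (Quotient.out x) = _
    rw [c2]
    simp only [Pi.smul_apply, smul_eq_mul]
    ring
  have hIconj : ∀ a b : H, (starRingEnd ℂ) (I a b) = I b a := by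
    intro a b
    show (starRingEnd ℂ) (∫ x : G ⧸ Z, Φ a b x ∂μ) = ∫ x : G ⧸ Z, Φ b a x ∂μ
    rw [← integral_conj]
    apply integral_congr_ae
    filter_upwards with x
    show (starRingEnd ℂ) ((starRingEnd ℂ) (T a (Quotient.out x)) * T b (Quotient.out x)) = _
    rw [map_mul, Complex.conj_conj]
    ring
  have hIinv : ∀ (x : G) (a b : H), I (π x a) (π x b) = I a b := by
    intro x a b
    have hpt : ∀ y : G ⧸ Z, Φ (π x a) (π x b) y = Φ a b ((QuotientGroup.mk x : G ⧸ Z)⁻¹ * y) := by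
      intro y
      obtain ⟨g, rfl⟩ := QuotientGroup.mk_surjective y
      rw [hΦmk, c7, c7]
      have hq : (QuotientGroup.mk x : G ⧸ Z)⁻¹ * QuotientGroup.mk g
          = QuotientGroup.mk (x⁻¹ * g) := by
        rw [QuotientGroup.mk_mul, QuotientGroup.mk_inv]
      rw [hq, hΦmk]
    calc I (π x a) (π x b) = ∫ y : G ⧸ Z, Φ a b ((QuotientGroup.mk x : G ⧸ Z)⁻¹ * y) ∂μ := by
          apply integral_congr_ae
          filter_upwards with y
          exact hpt y
      _ = ∫ y : G ⧸ Z, Φ a b y ∂μ := integral_mul_left_eq_self (Φ a b) _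
      _ = I a b := rfl
  -- Cauchy–Schwarz for the positive sesquilinear form I
  have hexp : ∀ (t : ℝ) (s : ℂ) (a b : H),
      ((Qr ((t : ℂ) • a + s • b) : ℝ) : ℂ)
        = (t : ℂ) ^ 2 * ((Qr a : ℝ) : ℂ)
          + (t : ℂ) * ((starRingEnd ℂ) s * I a b + s * (starRingEnd ℂ) (I a b))
          + (s * (starRingEnd ℂ) s) * ((Qr b : ℝ) : ℂ) := by
    intro t s a b
    rw [← hIdiag]
    simp only [hIadd1, hIadd2, hIsmul1, hIsmul2]
    rw [hIdiag, hIdiag, ← hIconj a b]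
    simp only [Complex.conj_ofReal, Complex.conj_conj]
    ring
  have hCS : ∀ a b : H, ‖I a b‖ ^ 2 ≤ Qr a * Qr b := by
    intro a b
    rcases eq_or_ne (I a b) 0 with h0 | h0
    · rw [h0]
      simpa using mul_nonneg (hQnonneg a) (hQnonneg b)
    · set w : ℂ := I a b with hw
      have hwn : (‖w‖ : ℝ) ≠ 0 := norm_ne_zero_iff.mpr h0
      set s : ℂ := w / (‖w‖ : ℂ) with hs
      have hcs : (starRingEnd ℂ) s = (starRingEnd ℂ) w / (‖w‖ : ℂ) := by
        rw [hs, map_div₀, Complex.conj_ofReal]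
      have hnzc : (‖w‖ : ℂ) ≠ 0 := by exact_mod_cast hwn
      have hss : s * (starRingEnd ℂ) s = 1 := by
        rw [hs, hcs, div_mul_div_comm, Complex.mul_conj', sq,
          div_self (mul_ne_zero hnzc hnzc)]
      have hsw : (starRingEnd ℂ) s * w + s * (starRingEnd ℂ) w = ((2 * ‖w‖ : ℝ) : ℂ) := by
        rw [hs, hcs, div_mul_eq_mul_div, div_mul_eq_mul_div, ← add_div,
          div_eq_iff hnzc]
        push_cast
        linear_combination (2 : ℂ) * Complex.mul_conj' w
      have hpoly : ∀ t : ℝ, 0 ≤ Qr a * (t * t) + (2 * ‖w‖) * t + Qr b := by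
        intro t
        have h1 := hQnonneg ((t : ℂ) • a + s • b)
        have h2 := hexp t s a b
        rw [hss, hsw, one_mul] at h2
        have h3 : ((Qr ((t : ℂ) • a + s • b) : ℝ) : ℂ)
            = ((Qr a * (t * t) + (2 * ‖w‖) * t + Qr b : ℝ) : ℂ) := by
          rw [h2]
          push_cast
          ring
        have h4 := Complex.ofReal_injective h3
        rw [h4] at h1
        linarith
      have hd := discrim_le_zero hpoly
      rw [discrim] at hd
      nlinarith [hd, norm_nonneg w]
  -- the seminorm u ↦ √(Qr u) and its continuity via Baire/barrelledness
  have hQsmul : ∀ (c : ℂ) (a : H), Qr (c • a) = ‖c‖ ^ 2 * Qr a := by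
    intro c a
    show ∫ x : G ⧸ Z, ‖T (c • a) (Quotient.out x)‖ ^ 2 ∂μ = _
    calc ∫ x : G ⧸ Z, ‖T (c • a) (Quotient.out x)‖ ^ 2 ∂μ
        = ∫ x : G ⧸ Z, ‖c‖ ^ 2 * ‖T a (Quotient.out x)‖ ^ 2 ∂μ := by
          apply integral_congr_ae
          filter_upwards with x
          rw [c2]
          simp only [Pi.smul_apply, smul_eq_mul, norm_mul, RCLike.norm_conj, mul_pow]
      _ = ‖c‖ ^ 2 * ∫ x : G ⧸ Z, ‖T a (Quotient.out x)‖ ^ 2 ∂μ := integral_const_mul _ _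
  set q : H → ℝ := fun a => Real.sqrt (Qr a) with hq
  have hqnn : ∀ a, 0 ≤ q a := fun a => Real.sqrt_nonneg _
  have hQadd_le : ∀ a b : H, Qr (a + b) ≤ (q a + q b) ^ 2 := by
    intro a b
    have h2 : ((Qr (a + b) : ℝ) : ℂ)
        = ((Qr a : ℝ) : ℂ) + ((Qr b : ℝ) : ℂ) + (I a b + (starRingEnd ℂ) (I a b)) := by
      rw [← hIdiag, hIadd1, hIadd2, hIadd2, hIdiag, hIdiag, ← hIconj a b]
      ring
    have hre : Qr (a + b) = Qr a + Qr b + 2 * (I a b).re := by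
      have h3 := congrArg Complex.re h2
      simp only [Complex.ofReal_re, Complex.add_re, Complex.conj_re] at h3
      linarith
    have hIb : (I a b).re ≤ q a * q b := by
      have h5 : (I a b).re ≤ ‖I a b‖ := Complex.re_le_norm _
      have h6 : ‖I a b‖ ≤ Real.sqrt (Qr a * Qr b) := by
        rw [← Real.sqrt_sq (norm_nonneg (I a b))]
        exact Real.sqrt_le_sqrt (hCS a b)
      rw [Real.sqrt_mul (hQnonneg a)] at h6
      linarith
    have e1 : q a ^ 2 = Qr a := Real.sq_sqrt (hQnonneg a)
    have e2 : q b ^ 2 = Qr b := Real.sq_sqrt (hQnonneg b)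
    nlinarith [hre, hIb, e1, e2]
  set p : Seminorm ℂ H := Seminorm.of q
    (fun a b => by
      have h7 : q (a + b) ≤ Real.sqrt ((q a + q b) ^ 2) := Real.sqrt_le_sqrt (hQadd_le a b)
      rwa [Real.sqrt_sq (by positivity)] at h7)
    (fun c a => by
      show Real.sqrt (Qr (c • a)) = ‖c‖ * Real.sqrt (Qr a)
      rw [hQsmul, Real.sqrt_mul (sq_nonneg _), Real.sqrt_sq (norm_nonneg _)]) with hp
  have hlsc : LowerSemicontinuous (p : H → ℝ) := by
    rw [lowerSemicontinuous_iff_isClosed_preimage]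
    intro y
    rcases lt_or_ge y 0 with hy | hy
    · convert isClosed_empty
      ext a
      simp only [Set.mem_preimage, Set.mem_Iic, Set.mem_empty_iff_false, iff_false, not_le]
      calc y < 0 := hy
        _ ≤ q a := hqnn a
    · have hset : (p : H → ℝ) ⁻¹' (Set.Iic y) = {a : H | Qr a ≤ y ^ 2} := by
        ext a
        simp only [Set.mem_preimage, Set.mem_Iic, Set.mem_setOf_eq]
        constructor
        · intro h
          have h' : q a ≤ y := h
          have h8 : q a ^ 2 ≤ y ^ 2 := by nlinarith [hqnn a]
          rwa [Real.sq_sqrt (hQnonneg a)] at h8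
        · intro h
          have h9 : Real.sqrt (Qr a) ≤ Real.sqrt (y ^ 2) := Real.sqrt_le_sqrt h
          rw [Real.sqrt_sq hy] at h9
          exact h9
      rw [hset]
      apply IsSeqClosed.isClosed
      intro u uu hmem htends
      simp only [Set.mem_setOf_eq] at hmem ⊢
      set F : H → (G ⧸ Z) → ENNReal := fun a x =>
        ENNReal.ofReal (‖T a (Quotient.out x)‖ ^ 2) with hF
      have hmeas : ∀ a : H, Measurable (F a) := by
        intro a
        apply Measurable.ennreal_ofReal
        have h10 : (fun x : G ⧸ Z => ‖T a (Quotient.out x)‖ ^ 2)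
            = fun x => (Φ a a x).re := by
          funext x
          rw [hΦre]
          exact (Complex.ofReal_re _).symm
        rw [h10]
        exact (Complex.continuous_re.comp (hΦcont a a)).measurable
      have hLrel : ∀ a : H, ∫⁻ x, F a x ∂μ = ENNReal.ofReal (Qr a) := by
        intro a
        have hsm : AEStronglyMeasurable (fun x : G ⧸ Z => ‖T a (Quotient.out x)‖ ^ 2) μ := by
          have h10 : (fun x : G ⧸ Z => ‖T a (Quotient.out x)‖ ^ 2)
              = fun x => (Φ a a x).re := by
            funext x
            rw [hΦre]
            exact (Complex.ofReal_re _).symm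
          rw [h10]
          exact (Complex.continuous_re.comp (hΦcont a a)).aestronglyMeasurable
        have h1 : Qr a = (∫⁻ x, F a x ∂μ).toReal := by
          rw [hQr]
          exact integral_eq_lintegral_of_nonneg_ae
            (Filter.Eventually.of_forall fun x => sq_nonneg _) hsm
        have h2 : ∫⁻ x, F a x ∂μ ≠ ⊤ := by
          have h3 := (hQint a).hasFiniteIntegral
          rw [HasFiniteIntegral] at h3
          have h4 : ∀ x : G ⧸ Z, F a x = (‖(‖T a (Quotient.out x)‖ ^ 2 : ℝ)‖₊ : ENNReal) := by
            intro x
            show ENNReal.ofReal (‖T a (Quotient.out x)‖ ^ 2) = _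
            rw [← Real.enorm_eq_ofReal (sq_nonneg _)]
            rfl
          have h5 : ∫⁻ x, F a x ∂μ
              = ∫⁻ x, (‖(‖T a (Quotient.out x)‖ ^ 2 : ℝ)‖₊ : ENNReal) ∂μ :=
            lintegral_congr h4
          rw [h5]
          exact h3.ne
        rw [h1, ENNReal.ofReal_toReal h2]
      have hup : ∀ n : ℕ, ∫⁻ x, F (u n) x ∂μ ≤ ENNReal.ofReal (y ^ 2) := by
        intro n
        rw [hLrel]
        exact ENNReal.ofReal_le_ofReal (hmem n)
      have hptw : ∀ x : G ⧸ Z,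
          Filter.Tendsto (fun n => F (u n) x) Filter.atTop (nhds (F uu x)) := by
        intro x
        have hc : Continuous fun a : H => F a x := by
          have h11 : (fun a : H => F a x)
              = fun a => ENNReal.ofReal (‖(⟪a, π (Quotient.out x) v⟫ : ℂ)‖ ^ 2) := by
            funext a
            show ENNReal.ofReal (‖T a (Quotient.out x)‖ ^ 2) = _
            rw [hT]
          rw [h11]
          exact ENNReal.continuous_ofReal.comp
            (((Continuous.inner continuous_id continuous_const).norm).pow 2)
        exact (hc.tendsto uu).comp htends
      have hfatou : ∫⁻ x, F uu x ∂μ ≤ ENNReal.ofReal (y ^ 2) := by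
        have h5 : ∫⁻ x, F uu x ∂μ
            = ∫⁻ x, Filter.liminf (fun n => F (u n) x) Filter.atTop ∂μ := by
          apply lintegral_congr
          intro x
          exact ((hptw x).liminf_eq).symm
        rw [h5]
        calc ∫⁻ x, Filter.liminf (fun n => F (u n) x) Filter.atTop ∂μ
            ≤ Filter.liminf (fun n => ∫⁻ x, F (u n) x ∂μ) Filter.atTop :=
              lintegral_liminf_le fun n => hmeas (u n)
          _ ≤ Filter.liminf (fun _ : ℕ => ENNReal.ofReal (y ^ 2)) Filter.atTop :=
              Filter.liminf_le_liminf (Filter.Eventually.of_forall hup)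
          _ = ENNReal.ofReal (y ^ 2) := Filter.liminf_const _
      have h12 : ENNReal.ofReal (Qr uu) ≤ ENNReal.ofReal (y ^ 2) := by
        rw [← hLrel]
        exact hfatou
      exact (ENNReal.ofReal_le_ofReal_iff (by positivity)).mp h12
  have hqcont : Continuous (p : H → ℝ) := p.continuous_of_lowerSemicontinuous hlsc
  obtain ⟨C, hCpos, hCb⟩ := p.bound_of_continuous_normedSpace hqcont
  have hQb : ∀ a : H, Qr a ≤ (C * ‖a‖) ^ 2 := by
    intro a
    have h13 : q a ≤ C * ‖a‖ := hCb a
    have h14 : q a ^ 2 ≤ (C * ‖a‖) ^ 2 := by nlinarith [hqnn a]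
    rwa [Real.sq_sqrt (hQnonneg a)] at h14
  -- Cauchy-Schwarz in seminorm form
  have hIbound : ∀ a b : H, ‖I a b‖ ≤ q a * q b := by
    intro a b
    have h6 : ‖I a b‖ ≤ Real.sqrt (Qr a * Qr b) := by
      rw [← Real.sqrt_sq (norm_nonneg (I a b))]
      exact Real.sqrt_le_sqrt (hCS a b)
    rwa [Real.sqrt_mul (hQnonneg a)] at h6
  -- the operator A representing the form I
  set Lf : H → (H →ₗ[ℂ] ℂ) := fun u =>
    { toFun := fun w => I w u
      map_add' := fun w w' => hIadd1 w w' u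
      map_smul' := fun c w => by
        simp only [RingHom.id_apply]
        exact hIsmul1 c w u } with hLf
  have hLfb : ∀ u w, ‖Lf u w‖ ≤ (C * q u) * ‖w‖ := by
    intro u w
    show ‖I w u‖ ≤ _
    calc ‖I w u‖ ≤ q w * q u := hIbound w u
      _ ≤ (C * ‖w‖) * q u := mul_le_mul_of_nonneg_right (hCb w) (hqnn u)
      _ = (C * q u) * ‖w‖ := by ring
  set Lc : H → (H →L[ℂ] ℂ) := fun u => LinearMap.mkContinuous (Lf u) (C * q u) (hLfb u) with hLc
  set A0 : H → H := fun u => (InnerProductSpace.toDual ℂ H).symm (Lc u) with hA0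
  have hA0inner : ∀ u w : H, (⟪A0 u, w⟫ : ℂ) = I w u := by
    intro u w
    show (⟪(InnerProductSpace.toDual ℂ H).symm (Lc u), w⟫ : ℂ) = I w u
    rw [InnerProductSpace.toDual_symm_apply]
    rfl
  have hA0add : ∀ u u', A0 (u + u') = A0 u + A0 u' := by
    intro u u'
    apply ext_inner_right ℂ
    intro w
    rw [hA0inner, inner_add_left, hA0inner, hA0inner, hIadd2]
  have hA0smul : ∀ (c : ℂ) (u : H), A0 (c • u) = c • A0 u := by
    intro c u
    apply ext_inner_right ℂ
    intro w
    rw [hA0inner, inner_smul_left, hA0inner, hIsmul2]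
  have hA0norm : ∀ u, ‖A0 u‖ ≤ (C * C) * ‖u‖ := by
    intro u
    have h1 : ‖A0 u‖ = ‖Lc u‖ := (InnerProductSpace.toDual ℂ H).symm.norm_map (Lc u)
    have h2 : ‖Lc u‖ ≤ C * q u :=
      LinearMap.mkContinuous_norm_le (Lf u) (mul_nonneg hCpos.le (hqnn u)) (hLfb u)
    calc ‖A0 u‖ = ‖Lc u‖ := h1
      _ ≤ C * q u := h2
      _ ≤ C * (C * ‖u‖) := mul_le_mul_of_nonneg_left (hCb u) hCpos.le
      _ = (C * C) * ‖u‖ := by ring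
  set A : H →L[ℂ] H := LinearMap.mkContinuous
    { toFun := A0
      map_add' := hA0add
      map_smul' := fun c u => by
        simp only [RingHom.id_apply]
        exact hA0smul c u } (C * C) hA0norm with hA
  have hAinner : ∀ u w : H, (⟪A u, w⟫ : ℂ) = I w u := fun u w => hA0inner u w
  have hAsym : IsSelfAdjoint A := by
    rw [ContinuousLinearMap.isSelfAdjoint_iff_isSymmetric]
    intro x y
    show (⟪A x, y⟫ : ℂ) = ⟪x, A y⟫
    have h2 : (⟪x, A y⟫ : ℂ) = (starRingEnd ℂ) (⟪A y, x⟫ : ℂ) := (inner_conj_symm _ _).symm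
    rw [hAinner, h2, hAinner, hIconj]
  have hAcomm : ∀ (g : G) (u : H), A (π g u) = π g (A u) := by
    intro g u
    apply ext_inner_right ℂ
    intro w
    rw [hAinner]
    calc I w (π g u) = I (π g (π g⁻¹ w)) (π g u) := by rw [hπinv g w]
      _ = I (π g⁻¹ w) u := hIinv g _ _
      _ = ⟪A u, π g⁻¹ w⟫ := (hAinner u _).symm
      _ = ⟪π g (A u), w⟫ := (hadj g (A u) w).symm
  have hnt : Nontrivial H := ⟨⟨v, 0, hv⟩⟩
  obtain ⟨r, hr⟩ := aux_schur π hirr A hAsym fun g w => hAcomm g w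
  have hQid : ∀ u : H, Qr u = r * ‖u‖ ^ 2 := by
    intro u
    have h4 : ((Qr u : ℝ) : ℂ) = ⟪A u, u⟫ := by rw [hAinner, hIdiag]
    have h8 : A u = (r : ℝ) • u := by
      rw [hr]
      simp
    have h5 : (⟪A u, u⟫ : ℂ) = ((r * ‖u‖ ^ 2 : ℝ) : ℂ) := by
      rw [h8, ← algebraMap_smul ℂ (r : ℝ) u, Complex.coe_algebraMap, inner_smul_left,
        inner_self_eq_norm_sq_to_K, Complex.conj_ofReal]
      push_cast
      exact rfl
    have h6 := h4.trans h5
    exact Complex.ofReal_injective h6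
  refine ⟨r, ?_, fun u => hQid u⟩
  -- positivity of the constant
  have hTv1 : T v 1 ≠ 0 := by
    rw [hT, hπ1]
    intro hcon
    exact hv (inner_self_eq_zero.mp hcon)
  have hQv : 0 < Qr v := by
    have hfc : Continuous (fun x : G ⧸ Z => ‖T v (Quotient.out x)‖ ^ 2) := by
      have h10 : (fun x : G ⧸ Z => ‖T v (Quotient.out x)‖ ^ 2) = fun x => (Φ v v x).re := by
        funext x
        rw [hΦre]
        exact (Complex.ofReal_re _).symm
      rw [h10]
      exact Complex.continuous_re.comp (hΦcont v v)
    have hnn : (0 : (G ⧸ Z) → ℝ) ≤ fun x : G ⧸ Z => ‖T v (Quotient.out x)‖ ^ 2 :=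
      fun x => sq_nonneg _
    have hiff := integral_pos_iff_support_of_nonneg hnn (hQint v)
    show 0 < ∫ x : G ⧸ Z, ‖T v (Quotient.out x)‖ ^ 2 ∂μ
    rw [hiff]
    have hU : IsOpen ((fun x : G ⧸ Z => ‖T v (Quotient.out x)‖ ^ 2) ⁻¹' Set.Ioi (0 : ℝ)) :=
      hfc.isOpen_preimage _ isOpen_Ioi
    have hfval : ‖T v (Quotient.out (QuotientGroup.mk (1 : G) : G ⧸ Z))‖ ^ 2 = ‖T v 1‖ ^ 2 := by
      have h7 : ((‖T v (Quotient.out (QuotientGroup.mk (1 : G) : G ⧸ Z))‖ ^ 2 : ℝ) : ℂ)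
          = ((‖T v 1‖ ^ 2 : ℝ) : ℂ) := by
        rw [← hΦre v _, hΦmk, mul_comm, Complex.mul_conj']
        norm_cast
      exact_mod_cast h7
    have hmem1 : (QuotientGroup.mk (1 : G) : G ⧸ Z)
        ∈ (fun x : G ⧸ Z => ‖T v (Quotient.out x)‖ ^ 2) ⁻¹' Set.Ioi (0 : ℝ) := by
      simp only [Set.mem_preimage, Set.mem_Ioi]
      rw [hfval]
      exact pow_pos (norm_pos_iff.mpr hTv1) 2
    calc (0 : ENNReal) < μ ((fun x : G ⧸ Z => ‖T v (Quotient.out x)‖ ^ 2) ⁻¹' Set.Ioi (0 : ℝ)) :=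
        hU.measure_pos μ ⟨_, hmem1⟩
      _ ≤ μ (Function.support fun x : G ⧸ Z => ‖T v (Quotient.out x)‖ ^ 2) := by
          apply measure_mono
          intro x hx
          simp only [Set.mem_preimage, Set.mem_Ioi] at hx
          exact Function.mem_support.mpr (ne_of_gt hx)
  have hvn : (0 : ℝ) < ‖v‖ ^ 2 := pow_pos (norm_pos_iff.mpr hv) 2
  have h15 := hQid v
  nlinarith [hQv, hvn, h15]
end

section
/- (Characterization of spherical functions.) Let G be a locally compact Hausdorff topological group with a left Haar measure, K a compact subgroup with normalized Haar measure dk, and φ : G → ℂ a continuous K-bi-invariant function with φ(1) = 1. Then the linear functional f ↦ (f ∗ φ)(1) = ∫_G f(g)φ(g⁻¹)dg is multiplicative on the convolution algebra C_c(K\G/K) of compactly supported continuous K-bi-invariant functions (i.e. ((f∗h)∗φ)(1) = ((f∗φ)(1))·((h∗φ)(1)) for all such f, h) if and only if φ satisfies the functional equation φ(g₁)·φ(g₂) = ∫_K φ(g₁ k g₂) dk for all g₁, g₂ ∈ G. -/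
open MeasureTheory Set Function

set_option linter.unusedSectionVars false
set_option maxHeartbeats 1000000

/-- Convolution of two complex valued functions with respect to a measure `ν` on a
group `G`: `(f ∗ h)(x) = ∫ f(g) h(g⁻¹x) dν(g)`. -/
noncomputable def convocc {G : Type*} [Group G] [MeasurableSpace G]
    (ν : Measure G) (f h : G → ℂ) : G → ℂ :=
  fun x => ∫ g, f g * h (g⁻¹ * x) ∂ν

/-- A function on `G` is `K`-bi-invariant if it is invariant under left and right
translation by elements of `K`. -/
def IsKBiInvariant {G : Type*} [Group G] (K : Subgroup G) (f : G → ℂ) : Prop :=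
  ∀ k ∈ K, ∀ g : G, f (k * g) = f g ∧ f (g * k) = f g





/-- Continuity of a parametric integral over a compact set. -/
lemma contParamSet {X Y E : Type*} [TopologicalSpace X] [TopologicalSpace Y] [T2Space Y]
    [MeasurableSpace Y] [OpensMeasurableSpace Y] (μ : Measure Y) [IsFiniteMeasureOnCompacts μ]
    [NormedAddCommGroup E] [NormedSpace ℝ E] [SecondCountableTopology E] [CompleteSpace E]
    {s : Set Y} (hs : IsCompact s) {ψ : Y → X → E}
    (hψ : Continuous (Function.uncurry ψ)) :
    Continuous (fun x => ∫ y in s, ψ y x ∂μ) := by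
  rw [continuous_iff_continuousAt]
  intro x₀
  rw [ContinuousAt, Metric.tendsto_nhds]
  intro ε hε
  set C : ℝ := (μ s).toReal + 1 with hC
  have hCpos : 0 < C := by positivity
  set d : ℝ := ε / (2 * C) with hd
  have hdpos : 0 < d := by positivity
  -- the set where the integrand is close
  have hopen : IsOpen {p : Y × X | ‖ψ p.1 p.2 - ψ p.1 x₀‖ < d} := by
    have : Continuous fun p : Y × X => ‖ψ p.1 p.2 - ψ p.1 x₀‖ := by
      apply Continuous.norm
      exact (hψ.comp (continuous_fst.prodMk continuous_snd)).sub
        (hψ.comp (continuous_fst.prodMk continuous_const))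
    exact isOpen_lt this continuous_const
  obtain ⟨u, v, hu, hv, hsu, hxv, huv⟩ := generalized_tube_lemma hs
    (isCompact_singleton (x := x₀)) hopen
    (by rintro ⟨y, x⟩ ⟨hy, hx⟩; simp only [mem_singleton_iff] at hx; subst hx
        simp [hdpos])
  filter_upwards [hv.mem_nhds (hxv rfl)] with x hx
  have hint : ∀ z : X, IntegrableOn (fun y => ψ y z) s μ := fun z =>
    ContinuousOn.integrableOn_compact hs
      ((hψ.comp (continuous_id.prodMk continuous_const)).continuousOn)
  have key : ∫ y in s, ψ y x ∂μ - ∫ y in s, ψ y x₀ ∂μ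
      = ∫ y in s, (ψ y x - ψ y x₀) ∂μ := (integral_sub (hint x) (hint x₀)).symm
  rw [dist_eq_norm, key]
  have hb : ∀ᵐ y ∂μ.restrict s, ‖ψ y x - ψ y x₀‖ ≤ d := by
    rw [ae_restrict_iff' hs.measurableSet]
    filter_upwards with y hy
    exact le_of_lt (huv (Set.mk_mem_prod (hsu hy) hx))
  haveI : Fact (μ s < ⊤) := ⟨hs.measure_lt_top⟩
  have := norm_integral_le_of_norm_le (μ := μ.restrict s)
    (f := fun y => ψ y x - ψ y x₀) (g := fun _ => d)
    (integrable_const _) hb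
  have h2 : ∫ _ in s, d ∂μ = (μ s).toReal * d := by
    simp [Measure.restrict_apply_univ, smul_eq_mul, measureReal_def]
  calc ‖∫ y in s, (ψ y x - ψ y x₀) ∂μ‖ ≤ (μ s).toReal * d := by rw [← h2]; exact this
  _ ≤ C * d := by
      apply mul_le_mul_of_nonneg_right _ hdpos.le
      have := ENNReal.toReal_nonneg (a := μ s)
      simp only [hC]; linarith
  _ = ε / 2 := by rw [hd, mul_div_assoc', div_eq_div_iff (by positivity) (by norm_num)]; ring
  _ < ε := by linarith

/-- Continuity of a parametric integral over a compact space. -/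
lemma contParam {X Kc E : Type*} [TopologicalSpace X] [TopologicalSpace Kc] [T2Space Kc]
    [CompactSpace Kc] [MeasurableSpace Kc] [OpensMeasurableSpace Kc] (μ : Measure Kc)
    [IsFiniteMeasureOnCompacts μ]
    [NormedAddCommGroup E] [NormedSpace ℝ E] [SecondCountableTopology E] [CompleteSpace E]
    {ψ : Kc → X → E} (hψ : Continuous (Function.uncurry ψ)) :
    Continuous (fun x => ∫ k, ψ k x ∂μ) := by
  have := contParamSet (μ := μ) isCompact_univ hψ
  simpa [Measure.restrict_univ] using this

/-- Positivity of the integral of a continuous nonnegative function positive somewhere. -/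
lemma integralPos {Y : Type*} [TopologicalSpace Y] [MeasurableSpace Y] [OpensMeasurableSpace Y]
    (μ : Measure Y) [μ.IsOpenPosMeasure] {w : Y → ℝ} (hw : Continuous w) (hnn : ∀ y, 0 ≤ w y)
    (hint : Integrable w μ) {y₀ : Y} (hpos : 0 < w y₀) : 0 < ∫ y, w y ∂μ := by
  rw [integral_pos_iff_support_of_nonneg hnn hint]
  have hopen : IsOpen (Function.support w) := by
    have : Function.support w = w ⁻¹' ({0}ᶜ) := by ext y; simp [Function.mem_support]
    rw [this]
    exact isOpen_compl_singleton.preimage hw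
  exact hopen.measure_pos μ ⟨y₀, ne_of_gt hpos⟩

section Kavg
variable {G : Type*} [Group G] [TopologicalSpace G] [IsTopologicalGroup G]
  [T2Space G] [LocallyCompactSpace G] [MeasurableSpace G] [BorelSpace G]
  {K : Subgroup G} [CompactSpace K] [BorelSpace K]
  (μK : Measure K) [μK.IsHaarMeasure] [IsProbabilityMeasure μK]

/-- Two-sided average of a function over a compact subgroup. -/
noncomputable def kavg (f : G → ℝ) : G → ℝ :=
  fun g => ∫ k₁ : K, ∫ k₂ : K, f ((k₁ : G)⁻¹ * g * (k₂ : G)) ∂μK ∂μK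

variable {f : G → ℝ}

lemma kavg_cont (hf : Continuous f) : Continuous (kavg μK f) := by
  have hcoe : Continuous (fun k : K => (k : G)) := continuous_subtype_val
  have h1 : Continuous (fun x : G => ∫ k₂ : K, f (x * (k₂ : G)) ∂μK) := by
    apply contParam μK (ψ := fun (k₂ : K) (x : G) => f (x * (k₂ : G)))
    exact hf.comp (continuous_snd.mul (hcoe.comp continuous_fst))
  apply contParam μK (ψ := fun (k₁ : K) (g : G) =>
    ∫ k₂ : K, f ((k₁ : G)⁻¹ * g * (k₂ : G)) ∂μK)
  exact h1.comp (((hcoe.comp continuous_fst).inv).mul continuous_snd)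

lemma kavg_left (k : K) (g : G) : kavg μK f ((k : G) * g) = kavg μK f g := by
  unfold kavg
  have := integral_mul_left_eq_self (μ := μK)
    (f := fun k₁ : K => ∫ k₂ : K, f ((k₁ : G)⁻¹ * g * (k₂ : G)) ∂μK) k⁻¹
  rw [← this]
  congr 1 with k₁
  congr 1 with k₂
  congr 1
  push_cast
  group

lemma kavg_right (k : K) (g : G) : kavg μK f (g * (k : G)) = kavg μK f g := by
  unfold kavg
  congr 1 with k₁
  have := integral_mul_left_eq_self (μ := μK)
    (f := fun k₂ : K => f ((k₁ : G)⁻¹ * g * (k₂ : G))) k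
  rw [← this]
  congr 1 with k₂
  congr 1
  push_cast
  group

lemma kavg_nonneg (hnn : ∀ x, 0 ≤ f x) (g : G) : 0 ≤ kavg μK f g :=
  integral_nonneg fun _ => integral_nonneg fun _ => hnn _

lemma kavg_pos (hf : Continuous f) (hnn : ∀ x, 0 ≤ f x) {g₀ : G} (hpos : 0 < f g₀) :
    0 < kavg μK f g₀ := by
  have hcoe : Continuous (fun k : K => (k : G)) := continuous_subtype_val
  set i1 : G → ℝ := fun x => ∫ k₂ : K, f (x * (k₂ : G)) ∂μK with hi1
  have hi1cont : Continuous i1 := by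
    apply contParam μK (ψ := fun (k₂ : K) (x : G) => f (x * (k₂ : G)))
    exact hf.comp (continuous_snd.mul (hcoe.comp continuous_fst))
  have hi1nn : ∀ x, 0 ≤ i1 x := fun x => integral_nonneg fun _ => hnn _
  have hint : ∀ w : K → ℝ, Continuous w → Integrable w μK := fun w hw =>
    hw.integrable_of_hasCompactSupport
      (IsCompact.of_isClosed_subset isCompact_univ (isClosed_tsupport w) (subset_univ _))
  have hi1pos : 0 < i1 g₀ := by
    apply integralPos μK (hf.comp (continuous_const.mul hcoe)) (fun _ => hnn _)
      (hint _ (hf.comp (continuous_const.mul hcoe))) (y₀ := 1)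
    simpa using hpos
  have : kavg μK f g₀ = ∫ k₁ : K, i1 ((k₁ : G)⁻¹ * g₀) ∂μK := rfl
  rw [this]
  apply integralPos μK (hi1cont.comp ((hcoe.inv).mul continuous_const))
    (fun _ => hi1nn _)
    (hint _ (hi1cont.comp ((hcoe.inv).mul continuous_const))) (y₀ := 1)
  simpa using hi1pos

lemma kavg_ne_zero {g : G} (h : kavg μK f g ≠ 0) :
    ∃ k₁ k₂ : K, f ((k₁ : G)⁻¹ * g * (k₂ : G)) ≠ 0 := by
  by_contra hc
  push_neg at hc
  apply h
  unfold kavg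
  simp [hc]

lemma kavg_hasCompactSupport (hK : IsCompact (K : Set G)) (hfs : HasCompactSupport f) :
    HasCompactSupport (kavg μK f) := by
  apply HasCompactSupport.intro ((hK.mul hfs).mul hK)
  intro g hg
  by_contra hne
  obtain ⟨k₁, k₂, hv⟩ := kavg_ne_zero μK hne
  apply hg
  have hmem : (k₁ : G)⁻¹ * g * (k₂ : G) ∈ tsupport f := subset_tsupport f hv
  have : g = ((k₁ : G) * ((k₁ : G)⁻¹ * g * (k₂ : G))) * ((k₂ : G)⁻¹) := by group
  rw [this]
  exact Set.mul_mem_mul (Set.mul_mem_mul k₁.2 hmem) (K.inv_mem k₂.2)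

lemma kavg_support_mem {g : G} (h : kavg μK f g ≠ 0) :
    ∃ (k₁ k₂ : K) (u : G), u ∈ support f ∧ g = (k₁ : G) * u * (k₂ : G) := by
  obtain ⟨k₁, k₂, hv⟩ := kavg_ne_zero μK h
  refine ⟨k₁, k₂⁻¹, (k₁ : G)⁻¹ * g * (k₂ : G), hv, ?_⟩
  push_cast
  group

end Kavg
section WK
variable {G : Type*} [Group G] [TopologicalSpace G] [IsTopologicalGroup G]
  [T2Space G] [LocallyCompactSpace G] [MeasurableSpace G] [BorelSpace G]
  {K : Subgroup G} [CompactSpace K] [BorelSpace K]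
  (μK : Measure K) [μK.IsHaarMeasure] [IsProbabilityMeasure μK]

/-- The spherical kernel `WK g y = ∫_K φ(y⁻¹ k g⁻¹) dk`. -/
noncomputable def WK (φ : G → ℂ) : G → G → ℂ :=
  fun g y => ∫ k : K, φ (y⁻¹ * ((k : G) * g⁻¹)) ∂μK

variable {φ : G → ℂ}

lemma WK_cont_pair (hφcont : Continuous φ) :
    Continuous (fun p : G × G => WK μK φ p.1 p.2) := by
  have hcoe : Continuous (fun k : K => (k : G)) := continuous_subtype_val
  apply contParam μK (ψ := fun (k : K) (p : G × G) => φ (p.2⁻¹ * ((k : G) * p.1⁻¹)))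
  exact hφcont.comp ((continuous_snd.snd.inv).mul
    ((hcoe.comp continuous_fst).mul continuous_snd.fst.inv))

lemma WK_inv_g [μK.IsMulRightInvariant]
    (hφr' : ∀ (k : K) (g : G), φ (g * (k : G)⁻¹) = φ g)
    (k₁ k₂ : K) (u y : G) : WK μK φ ((k₁ : G) * u * (k₂ : G)) y = WK μK φ u y := by
  unfold WK
  calc ∫ k : K, φ (y⁻¹ * ((k : G) * ((k₁ : G) * u * (k₂ : G))⁻¹)) ∂μK
      = ∫ k : K, φ (y⁻¹ * (((k * k₂⁻¹ : K) : G) * u⁻¹)) ∂μK := by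
        apply integral_congr_ae
        filter_upwards with k
        have harg : y⁻¹ * ((k : G) * ((k₁ : G) * u * (k₂ : G))⁻¹)
            = (y⁻¹ * (((k * k₂⁻¹ : K) : G) * u⁻¹)) * (k₁ : G)⁻¹ := by
          push_cast; group
        rw [harg, hφr' k₁]
    _ = ∫ k : K, φ (y⁻¹ * ((k : G) * u⁻¹)) ∂μK :=
        integral_mul_right_eq_self (μ := μK) (fun k : K => φ (y⁻¹ * ((k : G) * u⁻¹))) k₂⁻¹

lemma WK_inv_y
    (hφl' : ∀ (k : K) (g : G), φ ((k : G)⁻¹ * g) = φ g)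
    (k₁ k₂ : K) (g v : G) : WK μK φ g ((k₁ : G) * v * (k₂ : G)) = WK μK φ g v := by
  unfold WK
  calc ∫ k : K, φ (((k₁ : G) * v * (k₂ : G))⁻¹ * ((k : G) * g⁻¹)) ∂μK
      = ∫ k : K, φ (v⁻¹ * (((k₁⁻¹ * k : K) : G) * g⁻¹)) ∂μK := by
        apply integral_congr_ae
        filter_upwards with k
        have harg : ((k₁ : G) * v * (k₂ : G))⁻¹ * ((k : G) * g⁻¹)
            = (k₂ : G)⁻¹ * (v⁻¹ * (((k₁⁻¹ * k : K) : G) * g⁻¹)) := by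
          push_cast; group
        rw [harg, hφl' k₂]
    _ = ∫ k : K, φ (v⁻¹ * ((k : G) * g⁻¹)) ∂μK :=
        integral_mul_left_eq_self (μ := μK) (fun k : K => φ (v⁻¹ * ((k : G) * g⁻¹))) k₁⁻¹
end WK
section Key
variable {G : Type*} [Group G] [TopologicalSpace G] [IsTopologicalGroup G]
  [T2Space G] [LocallyCompactSpace G] [MeasurableSpace G] [BorelSpace G]
  (ν : Measure G) [ν.IsHaarMeasure]
  {K : Subgroup G} [CompactSpace K] [BorelSpace K]
  (μK : Measure K) [μK.IsHaarMeasure] [IsProbabilityMeasure μK]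
  {φ : G → ℂ}

/-- Averaging identity: integrating a `K`-left-invariant function against a
right-translate of `φ` equals integrating against the `K`-average. -/
lemma keyAvg (hφcont : Continuous φ) {h : G → ℂ} (hhc : Continuous h)
    (hhs : HasCompactSupport h) (hhl : ∀ (k : K) (y : G), h ((k : G) * y) = h y) (g : G) :
    ∫ y, h y * φ (y⁻¹ * g⁻¹) ∂ν
      = ∫ y, h y * (∫ k : K, φ (y⁻¹ * ((k : G) * g⁻¹)) ∂μK) ∂ν := by
  have hcoe : Continuous (fun k : K => (k : G)) := continuous_subtype_val
  have hswap := integral_integral_swap_of_hasCompactSupport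
    (f := fun y (k : K) => h y * φ (y⁻¹ * ((k : G) * g⁻¹))) (μ := ν) (ν := μK)
    (by
      apply Continuous.mul (hhc.comp continuous_fst)
      exact hφcont.comp ((continuous_fst.inv).mul ((hcoe.comp continuous_snd).mul
        continuous_const)))
    (by
      apply HasCompactSupport.intro (hhs.prod (isCompact_univ (X := K)))
      rintro ⟨y, k⟩ hyk
      have : y ∉ tsupport h := fun hy => hyk ⟨hy, mem_univ _⟩
      simp [image_eq_zero_of_notMem_tsupport this])
  calc ∫ y, h y * φ (y⁻¹ * g⁻¹) ∂ν
      = ∫ k : K, (∫ y, h y * φ (y⁻¹ * g⁻¹) ∂ν) ∂μK := by simp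
    _ = ∫ k : K, (∫ y, h y * φ (y⁻¹ * ((k : G) * g⁻¹)) ∂ν) ∂μK := by
        apply integral_congr_ae
        filter_upwards with k
        have := integral_mul_left_eq_self (μ := ν)
          (f := fun y => h y * φ (y⁻¹ * g⁻¹)) ((k : G))⁻¹
        calc ∫ y, h y * φ (y⁻¹ * g⁻¹) ∂ν
            = ∫ y, h ((k : G)⁻¹ * y) * φ (((k : G)⁻¹ * y)⁻¹ * g⁻¹) ∂ν := this.symm
          _ = ∫ y, h y * φ (y⁻¹ * ((k : G) * g⁻¹)) ∂ν := by
              apply integral_congr_ae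
              filter_upwards with y
              have h1 : h ((k : G)⁻¹ * y) = h y := by
                have := hhl k⁻¹ y; simpa using this
              have h2 : ((k : G)⁻¹ * y)⁻¹ * g⁻¹ = y⁻¹ * ((k : G) * g⁻¹) := by group
              rw [h1, h2]
    _ = ∫ y, (∫ k : K, h y * φ (y⁻¹ * ((k : G) * g⁻¹)) ∂μK) ∂ν := hswap.symm
    _ = ∫ y, h y * (∫ k : K, φ (y⁻¹ * ((k : G) * g⁻¹)) ∂μK) ∂ν := by
        apply integral_congr_ae
        filter_upwards with y
        exact integral_const_mul _ _

/-- Main identity: the spherical linear functional applied to a convolution. -/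
lemma keyA (hφcont : Continuous φ) {f h : G → ℂ}
    (hfc : Continuous f) (hfs : HasCompactSupport f)
    (hhc : Continuous h) (hhs : HasCompactSupport h)
    (hhl : ∀ (k : K) (y : G), h ((k : G) * y) = h y) :
    ∫ x, convocc ν f h x * φ x⁻¹ ∂ν
      = ∫ g, f g * ∫ y, h y * (∫ k : K, φ (y⁻¹ * ((k : G) * g⁻¹)) ∂μK) ∂ν ∂ν := by
  have hswap := integral_integral_swap_of_hasCompactSupport
    (f := fun (x : G) (g : G) => f g * h (g⁻¹ * x) * φ x⁻¹) (μ := ν) (ν := ν)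
    (by
      apply Continuous.mul
      · exact (hfc.comp continuous_snd).mul
          (hhc.comp ((continuous_snd.inv).mul continuous_fst))
      · exact hφcont.comp continuous_fst.inv)
    (by
      apply HasCompactSupport.intro ((hfs.mul hhs).prod hfs)
      rintro ⟨x, g⟩ hxg
      rcases eq_or_ne (f g) 0 with hf0 | hf0
      · simp [hf0]
      rcases eq_or_ne (h (g⁻¹ * x)) 0 with hh0 | hh0
      · simp [hh0]
      exfalso
      apply hxg
      constructor
      · have : x = g * (g⁻¹ * x) := by group
        rw [this]
        exact Set.mul_mem_mul (subset_tsupport f hf0) (subset_tsupport h hh0)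
      · exact subset_tsupport f hf0)
  calc ∫ x, convocc ν f h x * φ x⁻¹ ∂ν
      = ∫ x, ∫ g, f g * h (g⁻¹ * x) * φ x⁻¹ ∂ν ∂ν := by
        apply integral_congr_ae
        filter_upwards with x
        rw [convocc, ← integral_mul_const]
    _ = ∫ g, ∫ x, f g * h (g⁻¹ * x) * φ x⁻¹ ∂ν ∂ν := hswap
    _ = ∫ g, f g * ∫ y, h y * φ (y⁻¹ * g⁻¹) ∂ν ∂ν := by
        apply integral_congr_ae
        filter_upwards with g
        have e1 : ∫ x, f g * h (g⁻¹ * x) * φ x⁻¹ ∂ν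
            = f g * ∫ x, h (g⁻¹ * x) * φ x⁻¹ ∂ν := by
          rw [← integral_const_mul]
          apply integral_congr_ae
          filter_upwards with x
          ring
        rw [e1]
        congr 1
        have := integral_mul_left_eq_self (μ := ν)
          (f := fun x => h (g⁻¹ * x) * φ x⁻¹) g
        calc ∫ x, h (g⁻¹ * x) * φ x⁻¹ ∂ν
            = ∫ y, h (g⁻¹ * (g * y)) * φ (g * y)⁻¹ ∂ν := this.symm
          _ = ∫ y, h y * φ (y⁻¹ * g⁻¹) ∂ν := by
              apply integral_congr_ae
              filter_upwards with y
              have h1 : g⁻¹ * (g * y) = y := by group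
              have h2 : (g * y)⁻¹ = y⁻¹ * g⁻¹ := by group
              rw [h1, h2]
    _ = ∫ g, f g * ∫ y, h y * (∫ k : K, φ (y⁻¹ * ((k : G) * g⁻¹)) ∂μK) ∂ν ∂ν := by
        apply integral_congr_ae
        filter_upwards with g
        rw [keyAvg ν μK hφcont hhc hhs hhl g]

/-- The product of two spherical functionals as a double integral. -/
lemma keyB {f h : G → ℂ} :
    (∫ x, f x * φ x⁻¹ ∂ν) * ∫ x, h x * φ x⁻¹ ∂ν
      = ∫ g, f g * ((∫ y, h y * φ y⁻¹ ∂ν) * φ g⁻¹) ∂ν := by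
  rw [← integral_mul_const]
  apply integral_congr_ae
  filter_upwards with g
  ring
end Key

/-- Characterization of spherical functions.  Let `G` be a locally compact Hausdorff
group with left Haar measure `ν`, `K` a compact subgroup with normalized Haar
measure `μK`, and `φ : G → ℂ` continuous, `K`-bi-invariant with `φ(1) = 1`.  Then
`f ↦ (f ∗ φ)(1) = ∫ f(g) φ(g⁻¹) dν` is multiplicative on the convolution algebra
`C_c(K\G/K)` if and only if `φ(g₁)φ(g₂) = ∫_K φ(g₁ k g₂) dk` for all `g₁, g₂`. -/
theorem spherical_function_characterization
    {G : Type*} [Group G] [TopologicalSpace G] [IsTopologicalGroup G]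
    [T2Space G] [LocallyCompactSpace G] [MeasurableSpace G] [BorelSpace G]
    (ν : Measure G) [ν.IsHaarMeasure]
    (K : Subgroup G) (hK : IsCompact (K : Set G))
    [BorelSpace K] (μK : Measure K) [μK.IsHaarMeasure] [IsProbabilityMeasure μK]
    (φ : G → ℂ) (hφcont : Continuous φ) (hφbi : IsKBiInvariant K φ)
    (hφone : φ 1 = 1) :
    (∀ f h : G → ℂ,
        Continuous f → HasCompactSupport f → IsKBiInvariant K f →
        Continuous h → HasCompactSupport h → IsKBiInvariant K h →
        ∫ x, convocc ν f h x * φ x⁻¹ ∂ν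
          = (∫ x, f x * φ x⁻¹ ∂ν) * ∫ x, h x * φ x⁻¹ ∂ν) ↔
      (∀ g₁ g₂ : G, φ g₁ * φ g₂ = ∫ k : K, φ (g₁ * (k : G) * g₂) ∂μK) := by
  classical
  haveI hKcs : CompactSpace K := isCompact_iff_compactSpace.mp hK
  haveI hright : μK.IsMulRightInvariant := by
    constructor
    intro k
    haveI : IsProbabilityMeasure (Measure.map (· * k) μK) :=
      Measure.isProbabilityMeasure_map (measurable_mul_const k).aemeasurable
    exact Measure.isHaarMeasure_eq_of_isProbabilityMeasure _ _
  have hcoe : Continuous (fun k : K => (k : G)) := continuous_subtype_val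
  have hφl : ∀ (k : K) (g : G), φ ((k : G) * g) = φ g := fun k g => (hφbi k k.2 g).1
  have hφr : ∀ (k : K) (g : G), φ (g * (k : G)) = φ g := fun k g => (hφbi k k.2 g).2
  have hφl' : ∀ (k : K) (g : G), φ ((k : G)⁻¹ * g) = φ g := fun k g => by
    simpa using hφl k⁻¹ g
  have hφr' : ∀ (k : K) (g : G), φ (g * (k : G)⁻¹) = φ g := fun k g => by
    simpa using hφr k⁻¹ g
  have hWKdef : ∀ g y : G, WK μK φ g y = ∫ k : K, φ (y⁻¹ * ((k : G) * g⁻¹)) ∂μK :=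
    fun _ _ => rfl
  have keyA' : ∀ {f h : G → ℂ}, Continuous f → HasCompactSupport f →
      Continuous h → HasCompactSupport h → (∀ (k : K) (y : G), h ((k : G) * y) = h y) →
      ∫ x, convocc ν f h x * φ x⁻¹ ∂ν
        = ∫ g, f g * ∫ y, h y * WK μK φ g y ∂ν ∂ν :=
    fun hfc hfs hhc hhs hhl => keyA ν μK hφcont hfc hfs hhc hhs hhl
  have intCC : ∀ {w : G → ℂ}, Continuous w → HasCompactSupport w → Integrable w ν :=
    fun hc hs => hc.integrable_of_hasCompactSupport hs
  constructor
  · -- multiplicativity implies the functional equation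
    intro hmul a b
    -- it suffices to show δ = 0
    have hsuff : WK μK φ b⁻¹ a⁻¹ - φ a * φ b = 0 →
        φ a * φ b = ∫ k : K, φ (a * (k : G) * b) ∂μK := by
      intro h0
      have h1 : WK μK φ b⁻¹ a⁻¹ = φ a * φ b := sub_eq_zero.mp h0
      rw [← h1, hWKdef]
      apply integral_congr_ae
      filter_upwards with k
      congr 1
      group
    apply hsuff
    set δ : ℂ := WK μK φ b⁻¹ a⁻¹ - φ a * φ b with hδdef
    have hnorm : ∀ ε : ℝ, 0 < ε → ‖δ‖ ≤ ε := by
      intro ε hε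
      -- neighborhoods where the kernel deviation is small
      have hDcont : Continuous (fun p : G × G =>
          WK μK φ p.1 p.2 - φ p.2⁻¹ * φ p.1⁻¹) :=
        (WK_cont_pair μK hφcont).sub ((hφcont.comp continuous_snd.inv).mul
          (hφcont.comp continuous_fst.inv))
      have hOopen : IsOpen {p : G × G |
          ‖(WK μK φ p.1 p.2 - φ p.2⁻¹ * φ p.1⁻¹) - δ‖ < ε / 2} :=
        isOpen_lt ((hDcont.sub continuous_const).norm) continuous_const
      have hOmem : (b⁻¹, a⁻¹) ∈ {p : G × G |
          ‖(WK μK φ p.1 p.2 - φ p.2⁻¹ * φ p.1⁻¹) - δ‖ < ε / 2} := by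
        have : WK μK φ b⁻¹ a⁻¹ - φ (a⁻¹)⁻¹ * φ (b⁻¹)⁻¹ - δ = 0 := by
          rw [hδdef]; rw [inv_inv, inv_inv]; ring
        simp only [mem_setOf_eq, this, norm_zero]
        positivity
      obtain ⟨U, V, hUopen, hVopen, hbU, haV, hUV⟩ :=
        isOpen_prod_iff.mp hOopen b⁻¹ a⁻¹ hOmem
      -- bump functions
      obtain ⟨fc, hfc1, hfc0, hfcs, hfc01⟩ := exists_continuous_one_zero_of_isCompact
        (isCompact_singleton (x := b⁻¹)) hUopen.isClosed_compl
        (disjoint_compl_right_iff_subset.mpr (singleton_subset_iff.mpr hbU))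
      obtain ⟨hc, hhc1, hhc0, hhcs, hhc01⟩ := exists_continuous_one_zero_of_isCompact
        (isCompact_singleton (x := a⁻¹)) hVopen.isClosed_compl
        (disjoint_compl_right_iff_subset.mpr (singleton_subset_iff.mpr haV))
      -- averaged test functions
      set Fr : G → ℝ := kavg μK (fun x => fc x) with hFrdef
      set Hr : G → ℝ := kavg μK (fun x => hc x) with hHrdef
      have hFrcont : Continuous Fr := kavg_cont μK fc.continuous
      have hHrcont : Continuous Hr := kavg_cont μK hc.continuous
      have hFrsupp : HasCompactSupport Fr := kavg_hasCompactSupport μK hK hfcs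
      have hHrsupp : HasCompactSupport Hr := kavg_hasCompactSupport μK hK hhcs
      have hFrnn : ∀ g, 0 ≤ Fr g := kavg_nonneg μK (fun x => (hfc01 x).1)
      have hHrnn : ∀ g, 0 ≤ Hr g := kavg_nonneg μK (fun x => (hhc01 x).1)
      have hFrpos : 0 < Fr b⁻¹ := by
        apply kavg_pos μK fc.continuous (fun x => (hfc01 x).1)
        rw [hfc1 rfl]; norm_num
      have hHrpos : 0 < Hr a⁻¹ := by
        apply kavg_pos μK hc.continuous (fun x => (hhc01 x).1)
        rw [hhc1 rfl]; norm_num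
      set F : G → ℂ := fun g => ((Fr g : ℝ) : ℂ) with hFdef
      set H : G → ℂ := fun g => ((Hr g : ℝ) : ℂ) with hHdef
      have hFcont : Continuous F := Complex.continuous_ofReal.comp hFrcont
      have hHcont : Continuous H := Complex.continuous_ofReal.comp hHrcont
      have hFsupp : HasCompactSupport F :=
        hFrsupp.comp_left (g := fun r : ℝ => (r : ℂ)) Complex.ofReal_zero
      have hHsupp : HasCompactSupport H :=
        hHrsupp.comp_left (g := fun r : ℝ => (r : ℂ)) Complex.ofReal_zero
      have hFbi : IsKBiInvariant K F := by
        intro k hk g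
        constructor
        · exact congrArg (fun r : ℝ => (r : ℂ)) (kavg_left μK ⟨k, hk⟩ g)
        · exact congrArg (fun r : ℝ => (r : ℂ)) (kavg_right μK ⟨k, hk⟩ g)
      have hHbi : IsKBiInvariant K H := by
        intro k hk g
        constructor
        · exact congrArg (fun r : ℝ => (r : ℂ)) (kavg_left μK ⟨k, hk⟩ g)
        · exact congrArg (fun r : ℝ => (r : ℂ)) (kavg_right μK ⟨k, hk⟩ g)
      have hHl : ∀ (k : K) (y : G), H ((k : G) * y) = H y := fun k y =>
        congrArg (fun r : ℝ => (r : ℂ)) (kavg_left μK k y)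
      have hFrint : Integrable Fr ν := hFrcont.integrable_of_hasCompactSupport hFrsupp
      have hHrint : Integrable Hr ν := hHrcont.integrable_of_hasCompactSupport hHrsupp
      set IF : ℝ := ∫ g, Fr g ∂ν with hIFdef
      set IH : ℝ := ∫ y, Hr y ∂ν with hIHdef
      have hIFpos : 0 < IF := integralPos ν hFrcont hFrnn hFrint hFrpos
      have hIHpos : 0 < IH := integralPos ν hHrcont hHrnn hHrint hHrpos
      have hintF : ∫ g, F g ∂ν = (IF : ℂ) := by
        rw [hFdef, hIFdef]; exact integral_ofReal
      have hintH : ∫ y, H y ∂ν = (IH : ℂ) := by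
        rw [hHdef, hIHdef]; exact integral_ofReal
      set LH : ℂ := ∫ y, H y * φ y⁻¹ ∂ν with hLHdef
      -- the multiplicativity hypothesis in kernel form
      have hstar : ∫ g, F g * ∫ y, H y * WK μK φ g y ∂ν ∂ν
          = ∫ g, F g * (LH * φ g⁻¹) ∂ν := by
        rw [← keyA' hFcont hFsupp hHcont hHsupp hHl,
          hmul F H hFcont hFsupp hFbi hHcont hHsupp hHbi, keyB ν]
      -- continuity of the inner integral as a function of g
      have hWy : ∀ g : G, Continuous (fun y => WK μK φ g y) :=
        fun g => (WK_cont_pair μK hφcont).comp (continuous_const.prodMk continuous_id)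
      have hPcont : Continuous (fun g => ∫ y, H y * WK μK φ g y ∂ν) := by
        have heq : (fun g => ∫ y, H y * WK μK φ g y ∂ν)
            = fun g => ∫ y in tsupport H, H y * WK μK φ g y ∂ν := by
          funext g
          refine (setIntegral_eq_integral_of_forall_compl_eq_zero fun y hy => ?_).symm
          simp [image_eq_zero_of_notMem_tsupport hy]
        rw [heq]
        apply contParamSet ν hHsupp
          (ψ := fun (y : G) (g : G) => H y * WK μK φ g y)
        exact (hHcont.comp continuous_fst).mul
          ((WK_cont_pair μK hφcont).comp (continuous_snd.prodMk continuous_fst))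
      -- pointwise bound
      have hptw : ∀ g : G, ‖F g * (∫ y, H y * WK μK φ g y ∂ν)
          - F g * ((LH * φ g⁻¹) + δ * (IH : ℂ))‖ ≤ Fr g * (ε / 2 * IH) := by
        intro g
        rcases eq_or_ne (Fr g) 0 with h0 | h0
        · have hF0 : F g = 0 := by rw [hFdef]; simp [h0]
          simp only [hF0, zero_mul, sub_zero, norm_zero, h0]
          positivity
        · obtain ⟨k₁, k₂, u, hu, hgeq⟩ := kavg_support_mem μK (hFrdef ▸ h0)
          have huU : u ∈ U := by
            by_contra hnu
            exact hu (hfc0 hnu)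
          -- inner pointwise bound in y
          have hin : ∀ y : G, ‖H y * (WK μK φ g y - φ y⁻¹ * φ g⁻¹ - δ)‖
              ≤ Hr y * (ε / 2) := by
            intro y
            rcases eq_or_ne (Hr y) 0 with hy0 | hy0
            · have : H y = 0 := by rw [hHdef]; simp [hy0]
              simp only [this, zero_mul, norm_zero, hy0, zero_mul]
              positivity
            · obtain ⟨l₁, l₂, v, hv, hyeq⟩ := kavg_support_mem μK (hHrdef ▸ hy0)
              have hvV : v ∈ V := by
                by_contra hnv
                exact hv (hhc0 hnv)
              have hWg : WK μK φ g y = WK μK φ u v := by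
                rw [hgeq, hyeq, WK_inv_g μK hφr', WK_inv_y μK hφl']
              have hφy : φ y⁻¹ = φ v⁻¹ := by
                have harg : y⁻¹ = (l₂ : G)⁻¹ * (v⁻¹ * (l₁ : G)⁻¹) := by
                  rw [hyeq]; group
                rw [harg, hφl' l₂, hφr' l₁]
              have hφg : φ g⁻¹ = φ u⁻¹ := by
                have harg : g⁻¹ = (k₂ : G)⁻¹ * (u⁻¹ * (k₁ : G)⁻¹) := by
                  rw [hgeq]; group
                rw [harg, hφl' k₂, hφr' k₁]
              have hOin := hUV (Set.mk_mem_prod huU hvV)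
              simp only [mem_setOf_eq] at hOin
              calc ‖H y * (WK μK φ g y - φ y⁻¹ * φ g⁻¹ - δ)‖
                  = Hr y * ‖WK μK φ u v - φ v⁻¹ * φ u⁻¹ - δ‖ := by
                    rw [hWg, hφy, hφg, norm_mul, hHdef]
                    simp [abs_of_nonneg (hHrnn y)]
                _ ≤ Hr y * (ε / 2) :=
                    mul_le_mul_of_nonneg_left hOin.le (hHrnn y)
          -- integrate the inner bound
          have hHWint : Integrable (fun y => H y * WK μK φ g y) ν :=
            intCC (hHcont.mul (hWy g)) (hHsupp.mul_right)
          have hHφint : Integrable (fun y => H y * (φ y⁻¹ * φ g⁻¹)) ν :=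
            intCC (hHcont.mul ((hφcont.comp continuous_inv).mul continuous_const))
              (hHsupp.mul_right)
          have hHδint : Integrable (fun y => H y * δ) ν :=
            intCC (hHcont.mul continuous_const) (hHsupp.mul_right)
          have hHφval : ∫ y, H y * (φ y⁻¹ * φ g⁻¹) ∂ν = LH * φ g⁻¹ := by
            rw [hLHdef, ← integral_mul_const]
            apply integral_congr_ae
            filter_upwards with y
            ring
          have hHδval : ∫ y, H y * δ ∂ν = δ * (IH : ℂ) := by
            rw [integral_mul_const, hintH, mul_comm]
          have hcomb : (∫ y, H y * WK μK φ g y ∂ν) - (LH * φ g⁻¹) - δ * (IH : ℂ)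
              = ∫ y, H y * (WK μK φ g y - φ y⁻¹ * φ g⁻¹ - δ) ∂ν := by
            have e1 : ∀ y : G, H y * (WK μK φ g y - φ y⁻¹ * φ g⁻¹ - δ)
                = H y * WK μK φ g y - H y * (φ y⁻¹ * φ g⁻¹) - H y * δ :=
              fun y => by ring
            rw [show (fun y => H y * (WK μK φ g y - φ y⁻¹ * φ g⁻¹ - δ))
              = fun y => H y * WK μK φ g y - H y * (φ y⁻¹ * φ g⁻¹) - H y * δ
              from funext e1]
            have hAB : Integrable
                (fun y => H y * WK μK φ g y - H y * (φ y⁻¹ * φ g⁻¹)) ν :=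
              hHWint.sub hHφint
            rw [integral_sub hAB hHδint, integral_sub hHWint hHφint, hHφval, hHδval]
          have hbound : ‖(∫ y, H y * WK μK φ g y ∂ν) - (LH * φ g⁻¹) - δ * (IH : ℂ)‖
              ≤ ε / 2 * IH := by
            rw [hcomb]
            have hb := norm_integral_le_of_norm_le (μ := ν)
              (f := fun y => H y * (WK μK φ g y - φ y⁻¹ * φ g⁻¹ - δ))
              (g := fun y => Hr y * (ε / 2)) (hHrint.mul_const _)
              (Filter.Eventually.of_forall hin)
            calc ‖∫ y, H y * (WK μK φ g y - φ y⁻¹ * φ g⁻¹ - δ) ∂ν‖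
                ≤ ∫ y, Hr y * (ε / 2) ∂ν := hb
              _ = ε / 2 * IH := by rw [integral_mul_const, hIHdef]; ring
          have e2 : F g * (∫ y, H y * WK μK φ g y ∂ν)
              - F g * ((LH * φ g⁻¹) + δ * (IH : ℂ))
              = F g * ((∫ y, H y * WK μK φ g y ∂ν) - (LH * φ g⁻¹) - δ * (IH : ℂ)) := by
            ring
          rw [e2, norm_mul]
          have hnF : ‖F g‖ = Fr g := by
            rw [hFdef]; simp [abs_of_nonneg (hFrnn g)]
          rw [hnF]
          exact mul_le_mul_of_nonneg_left hbound (hFrnn g)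
      -- integrate the pointwise bound
      have hFPint : Integrable (fun g => F g * ∫ y, H y * WK μK φ g y ∂ν) ν :=
        intCC (hFcont.mul hPcont) (hFsupp.mul_right)
      have hFQint : Integrable (fun g => F g * (LH * φ g⁻¹)) ν :=
        intCC (hFcont.mul (continuous_const.mul (hφcont.comp continuous_inv)))
          (hFsupp.mul_right)
      have hFδint : Integrable (fun g => F g * (δ * (IH : ℂ))) ν :=
        intCC (hFcont.mul continuous_const) (hFsupp.mul_right)
      have hFQδint : Integrable (fun g => F g * ((LH * φ g⁻¹) + δ * (IH : ℂ))) ν := by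
        have : (fun g => F g * ((LH * φ g⁻¹) + δ * (IH : ℂ)))
            = fun g => F g * (LH * φ g⁻¹) + F g * (δ * (IH : ℂ)) := by
          funext g; ring
        rw [this]
        exact hFQint.add hFδint
      have hsubval : ∫ g, (F g * (∫ y, H y * WK μK φ g y ∂ν)
          - F g * ((LH * φ g⁻¹) + δ * (IH : ℂ))) ∂ν = -(δ * (IH : ℂ) * (IF : ℂ)) := by
        rw [integral_sub hFPint hFQδint]
        have e3 : (fun g => F g * ((LH * φ g⁻¹) + δ * (IH : ℂ)))
            = fun g => F g * (LH * φ g⁻¹) + F g * (δ * (IH : ℂ)) := by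
          funext g; ring
        rw [e3, integral_add hFQint hFδint, integral_mul_const, hintF, hstar]
        ring
      have hfinal : ‖δ * (IH : ℂ) * (IF : ℂ)‖ ≤ IF * (ε / 2 * IH) := by
        have hb := norm_integral_le_of_norm_le (μ := ν)
          (f := fun g => F g * (∫ y, H y * WK μK φ g y ∂ν)
            - F g * ((LH * φ g⁻¹) + δ * (IH : ℂ)))
          (g := fun g => Fr g * (ε / 2 * IH)) (hFrint.mul_const _)
          (Filter.Eventually.of_forall hptw)
        rw [hsubval, norm_neg] at hb
        calc ‖δ * (IH : ℂ) * (IF : ℂ)‖ ≤ ∫ g, Fr g * (ε / 2 * IH) ∂ν := hb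
          _ = IF * (ε / 2 * IH) := by rw [integral_mul_const, hIFdef]
      have hnδ : ‖δ‖ * IH * IF ≤ IF * (ε / 2 * IH) := by
        have : ‖δ * (IH : ℂ) * (IF : ℂ)‖ = ‖δ‖ * IH * IF := by
          rw [norm_mul, norm_mul]
          simp [abs_of_nonneg hIHpos.le, abs_of_nonneg hIFpos.le]
        rw [← this]
        exact hfinal
      have h1 : ‖δ‖ * (IH * IF) ≤ ε / 2 * (IH * IF) := by
        calc ‖δ‖ * (IH * IF) = ‖δ‖ * IH * IF := by ring
          _ ≤ IF * (ε / 2 * IH) := hnδ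
          _ = ε / 2 * (IH * IF) := by ring
      have h2 : ‖δ‖ ≤ ε / 2 :=
        (mul_le_mul_iff_left₀ (mul_pos hIHpos hIFpos)).mp h1
      linarith
    have hle : ‖δ‖ ≤ 0 := by
      apply le_of_forall_pos_le_add
      intro ε hε
      calc ‖δ‖ ≤ ε := hnorm ε hε
        _ ≤ 0 + ε := by linarith
    exact norm_le_zero_iff.mp hle
  · -- the functional equation implies multiplicativity
    intro hfeq f h hf1 hf2 hf3 hh1 hh2 hh3
    have hhl : ∀ (k : K) (y : G), h ((k : G) * y) = h y := fun k y => (hh3 k k.2 y).1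
    rw [keyA' hf1 hf2 hh1 hh2 hhl, keyB ν]
    apply integral_congr_ae
    filter_upwards with g
    congr 1
    have hker : ∀ y : G, WK μK φ g y = φ y⁻¹ * φ g⁻¹ := by
      intro y
      rw [hWKdef, hfeq y⁻¹ g⁻¹]
      apply integral_congr_ae
      filter_upwards with k
      rw [mul_assoc]
    calc ∫ y, h y * WK μK φ g y ∂ν
        = ∫ y, (h y * φ y⁻¹) * φ g⁻¹ ∂ν := by
          apply integral_congr_ae
          filter_upwards with y
          rw [hker y]; ring
      _ = (∫ y, h y * φ y⁻¹ ∂ν) * φ g⁻¹ := integral_mul_const _ _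
end

section
/- Let G be a locally compact Hausdorff topological group, K a compact subgroup with normalized Haar measure dk, and π an irreducible unitary representation of G on a complex Hilbert space H such that the subspace H^K of K-fixed vectors is one-dimensional. Let v ∈ H^K with ‖v‖ = 1 and define φ(g) = ⟨v, π(g)v⟩. Then φ is continuous, K-bi-invariant, φ(1) = 1, and φ satisfies the spherical functional equation φ(g₁)·φ(g₂) = ∫_K φ(g₁ k g₂) dk for all g₁, g₂ ∈ G; moreover φ is positive definite, i.e. Σ_{i,j} φ(g_j⁻¹ g_i)·conj(c_j)·c_i ≥ 0 for all finite families {c_i} ⊂ ℂ, {g_i} ⊂ G. -/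
open MeasureTheory
open scoped ComplexInnerProductSpace ComplexConjugate

/-- Positive definite spherical functions from irreducible representations with a
one-dimensional space of `K`-fixed vectors.  Let `G` be a topological group, `K` a
compact subgroup with normalized Haar measure `μK`, and `π` an irreducible strongly
continuous unitary representation of `G` on a complex Hilbert space `H` whose space
`H^K` of `K`-fixed vectors is one-dimensional, spanned by a unit vector `v`.  Then
`φ(g) = ⟨v, π(g)v⟩` is continuous, `K`-bi-invariant, `φ(1) = 1`, satisfies the
spherical functional equation `φ(g₁)φ(g₂) = ∫_K φ(g₁ k g₂) dk`, and is positive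
definite. -/
theorem spherical_function_from_representation
    {G : Type*} [Group G] [TopologicalSpace G] [IsTopologicalGroup G]
    [T2Space G] [MeasurableSpace G] [BorelSpace G]
    (K : Subgroup G) (hK : IsCompact (K : Set G))
    [BorelSpace K] (μK : Measure K) [μK.IsHaarMeasure] [IsProbabilityMeasure μK]
    {H : Type*} [NormedAddCommGroup H] [InnerProductSpace ℂ H] [CompleteSpace H]
    (π : G → (H ≃ₗᵢ[ℂ] H))
    (hhom : ∀ (g g' : G) (u : H), π (g * g') u = π g (π g' u))
    (hcont : Continuous fun p : G × H => π p.1 p.2)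
    (hirr : ∀ V : Submodule ℂ H, IsClosed (V : Set H) →
      (∀ g : G, ∀ u ∈ V, π g u ∈ V) → V = ⊥ ∨ V = ⊤)
    -- `v` is a `K`-fixed unit vector spanning the (one-dimensional) space `H^K`
    (v : H) (hvnorm : ‖v‖ = 1)
    (hvfix : ∀ k : K, π (k : G) v = v)
    (hdim : ∀ u : H, (∀ k : K, π (k : G) u = u) → ∃ c : ℂ, u = c • v)
    (φ : G → ℂ) (hφ : ∀ g : G, φ g = ⟪v, π g v⟫) :
    Continuous φ ∧
    (∀ k ∈ K, ∀ g : G, φ (k * g) = φ g ∧ φ (g * k) = φ g) ∧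
    φ 1 = 1 ∧
    (∀ g₁ g₂ : G, φ g₁ * φ g₂ = ∫ k : K, φ (g₁ * (k : G) * g₂) ∂μK) ∧
    (∀ (n : ℕ) (c : Fin n → ℂ) (g : Fin n → G),
      0 ≤ (∑ i, ∑ j, φ ((g j)⁻¹ * g i) * conj (c j) * c i).re ∧
      (∑ i, ∑ j, φ ((g j)⁻¹ * g i) * conj (c j) * c i).im = 0) := by
  haveI : CompactSpace K := isCompact_iff_compactSpace.mp hK
  -- π 1 = id
  have h1 : ∀ u : H, π 1 u = u := by
    intro u
    have h := hhom 1 1 u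
    rw [one_mul] at h
    exact ((π 1).injective h).symm
  have hcancel : ∀ (g : G) (u : H), π g (π g⁻¹ u) = u := by
    intro g u
    rw [← hhom, mul_inv_cancel, h1]
  have hadj : ∀ (g : G) (x y : H), ⟪x, π g⁻¹ y⟫ = ⟪π g x, y⟫ := by
    intro g x y
    conv_rhs => rw [← hcancel g y]
    exact ((π g).inner_map_map x (π g⁻¹ y)).symm
  have hvv : ⟪v, v⟫ = (1 : ℂ) := by
    rw [inner_self_eq_norm_sq_to_K, hvnorm]; norm_num
  -- pairing formula
  have hpair : ∀ g₁ g₂ : G, φ (g₁⁻¹ * g₂) = ⟪π g₁ v, π g₂ v⟫ := by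
    intro g₁ g₂
    rw [hφ, hhom, hadj]
  constructor
  · -- continuity
    have hc1 : Continuous fun g : G => π g v :=
      hcont.comp (continuous_id.prodMk continuous_const)
    have : φ = fun g => ⟪v, π g v⟫ := funext hφ
    rw [this]
    exact continuous_const.inner hc1
  constructor
  · -- bi-invariance
    intro k hk g
    have hfix : π k v = v := hvfix ⟨k, hk⟩
    constructor
    · calc φ (k * g) = ⟪v, π (k * g) v⟫ := hφ _
        _ = ⟪π k v, π k (π g v)⟫ := by rw [hfix, hhom]
        _ = ⟪v, π g v⟫ := (π k).inner_map_map _ _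
        _ = φ g := (hφ _).symm
    · calc φ (g * k) = ⟪v, π g (π k v)⟫ := by rw [hφ, hhom]
        _ = φ g := by rw [hfix, hφ]
  constructor
  · rw [hφ, h1, hvv]
  constructor
  · -- functional equation
    intro g₁ g₂
    set w := π g₂ v with hw
    have hcontK : Continuous fun k : K => π (k : G) w :=
      hcont.comp (continuous_subtype_val.prodMk continuous_const)
    have hint : Integrable (fun k : K => π (k : G) w) μK :=
      hcontK.integrable_of_hasCompactSupport (HasCompactSupport.of_compactSpace _)
    set P := ∫ k, π (k : G) w ∂μK with hP
    have hPfix : ∀ k₀ : K, π (k₀ : G) P = P := by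
      intro k₀
      have L := ((π (k₀ : G)).toLinearIsometry.toContinuousLinearMap)
      calc π (k₀ : G) P
          = ∫ k, π (k₀ : G) (π (k : G) w) ∂μK := by
            exact (ContinuousLinearMap.integral_comp_comm
              ((π (k₀ : G)).toLinearIsometry.toContinuousLinearMap) hint).symm
        _ = ∫ k, π (((k₀ * k : K) : G)) w ∂μK := by
            refine integral_congr_ae (Filter.Eventually.of_forall fun k => ?_)
            show π (k₀ : G) (π (k : G) w) = π (((k₀ * k : K) : G)) w
            rw [Subgroup.coe_mul, hhom]
        _ = P := integral_mul_left_eq_self (fun k : K => π (k : G) w) k₀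
    obtain ⟨cP, hcP⟩ := hdim P hPfix
    have hinn : ∀ k : K, ⟪v, π (k : G) w⟫ = ⟪v, w⟫ := by
      intro k
      conv_lhs => rw [← hvfix k]
      exact (π (k : G)).inner_map_map v w
    have hvP : ⟪v, P⟫ = φ g₂ := by
      rw [hP, ← integral_inner hint v]
      simp only [hinn]
      rw [integral_const]
      simp [hφ g₂, hw]
    have hcval : cP = φ g₂ := by
      have : ⟪v, P⟫ = cP := by rw [hcP, inner_smul_right, hvv, mul_one]
      rw [← this, hvP]
    have hpoint : ∀ k : K, φ (g₁ * (k : G) * g₂) = ⟪π g₁⁻¹ v, π (k : G) w⟫ := by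
      intro k
      rw [hφ, hhom, hhom]
      have := hadj g₁⁻¹ v (π (k : G) (π g₂ v))
      rw [inv_inv] at this
      rw [this, hw]
    calc φ g₁ * φ g₂
        = φ g₂ * ⟪π g₁⁻¹ v, v⟫ := by
          have := hadj g₁⁻¹ v v
          rw [inv_inv] at this
          rw [← this, ← hφ g₁]; ring
      _ = ⟪π g₁⁻¹ v, cP • v⟫ := by rw [inner_smul_right, hcval]
      _ = ⟪π g₁⁻¹ v, P⟫ := by rw [← hcP]
      _ = ∫ k, ⟪π g₁⁻¹ v, π (k : G) w⟫ ∂μK := (integral_inner hint _).symm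
      _ = ∫ k : K, φ (g₁ * (k : G) * g₂) ∂μK := by
          refine integral_congr_ae (Filter.Eventually.of_forall fun k => ?_)
          exact (hpoint k).symm
  · -- positive definiteness
    intro n c g
    set S := ∑ i, c i • π (g i) v with hS
    have key : (∑ i, ∑ j, φ ((g j)⁻¹ * g i) * conj (c j) * c i) = ⟪S, S⟫ := by
      rw [hS, sum_inner]
      rw [Finset.sum_comm]
      refine Finset.sum_congr rfl fun i _ => ?_
      rw [inner_sum]
      refine Finset.sum_congr rfl fun j _ => ?_
      rw [inner_smul_left, inner_smul_right, hpair]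
      ring
    rw [key]
    exact ⟨_root_.inner_self_nonneg (𝕜 := ℂ) (x := S), _root_.inner_self_im (𝕜 := ℂ) S⟩
end
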